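/- arXiv:2001.03892 — 4 statements merged into one kernel-verified Lean document; each statement's English description precedes it below -/
import Mathlib

section
/- If two splitting filtrations 𝔖 and 𝔖′ of order N have the same branch set B(𝔖) = B(𝔖′), then for every branch λ the branch degrees coincide: deg_𝔖(λ) = deg_𝔖′(λ). -/
open Finset MeasureTheory

noncomputable section

structure SplittingFiltration (N : ℕ) where
  L : ℕ
  π : ℕ → Finpartition (Finset.univ : Finset (Fin N))
  top_eq : (π 0).parts = {Finset.univ}
  strict : ∀ ℓ < L, π (ℓ + 1) < π ℓ
  bot_eq : ∀ ℓ, L ≤ ℓ → π ℓ = ⊥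

namespace SplittingFiltration

variable {N : ℕ} (S : SplittingFiltration N)

/-- The branch set: non-singleton blocks appearing in levels `0,…,L−1`. -/
def branches : Finset (Finset (Fin N)) :=
  ((Finset.range S.L).biUnion fun ℓ => (S.π ℓ).parts).filter fun b => 1 < b.card

/-- The branch depth: the largest level index `ℓ < L` whose partition contains `b`. -/
def depth (b : Finset (Fin N)) : ℕ := sSup {ℓ | ℓ < S.L ∧ b ∈ (S.π ℓ).parts}

/-- The branch degree: the number of blocks of the next level contained in `b`. -/
def deg (b : Finset (Fin N)) : ℕ := ((S.π (S.depth b + 1)).parts.filter fun c => c ⊆ b).card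

/-- The multiplicity `M_{𝔖,q}`, a product of falling factorials `(q−1)_{deg−1}`. -/
def mult (q : ℕ) : ℕ := ∏ b ∈ S.branches, (q - 1).descFactorial (S.deg b - 1)

/-- A splitting filtration is reduced if each branch lies in exactly one level. -/
def Reduced : Prop := ∀ b ∈ S.branches, ∃! ℓ, ℓ < S.L ∧ b ∈ (S.π ℓ).parts

end SplittingFiltration

/-- The rank of a partition of `[N]`: `N` minus the number of blocks. -/
def prank {N : ℕ} (P : Finpartition (Finset.univ : Finset (Fin N))) : ℕ :=
  N - P.parts.card

/-- The set of ordered pairs `(i,j)` with `i < j`. -/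
def pairFinset (N : ℕ) : Finset (Fin N × Fin N) := Finset.univ.filter fun p => p.1 < p.2

/-- `Σ_{i<j, i,j ∈ b} s i j`. -/
def pairSum {N : ℕ} (s : Fin N → Fin N → ℂ) (b : Finset (Fin N)) : ℂ :=
  ∑ p ∈ (pairFinset N).filter (fun p => p.1 ∈ b ∧ p.2 ∈ b), s p.1 p.2

/-- Branch exponent `e_b(s) = (#b − 1) + Σ_{i<j ∈ b} s_{ij}`. -/
def branchExp {N : ℕ} (s : Fin N → Fin N → ℂ) (b : Finset (Fin N)) : ℂ :=
  ((b.card : ℂ) - 1) + pairSum s b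

/-- Level exponent `E_{𝔖,ℓ}(s) = Σ_{b ∈ B(𝔖) ∩ π_ℓ} e_b(s)`. -/
def levelExp {N : ℕ} (S : SplittingFiltration N) (s : Fin N → Fin N → ℂ) (ℓ : ℕ) : ℂ :=
  ∑ b ∈ (S.π ℓ).parts.filter (fun b => 1 < b.card), branchExp s b

/-- `m_ℓ = −1 + n_0 + ⋯ + n_{ℓ−1}`. -/
def mval (n : ℕ → ℕ) (ℓ : ℕ) : ℤ := (∑ t ∈ Finset.range ℓ, (n t : ℤ)) - 1

/-- Two indices lie in a common block of the partition `P`. -/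
def SamePart {N : ℕ} (P : Finpartition (Finset.univ : Finset (Fin N))) (i j : Fin N) : Prop :=
  ∃ b ∈ P.parts, i ∈ b ∧ j ∈ b

/-- `x ∈ T(𝔖, n)`: the level pair associated to `x` is `(𝔖, n)`. -/
def InT {K : Type*} [NormedField K] (q : ℕ) {N : ℕ} (S : SplittingFiltration N)
    (n : ℕ → ℕ) (x : Fin N → K) : Prop :=
  (∀ i, ‖x i‖ ≤ 1) ∧
  (∀ ℓ < S.L, ∀ i j : Fin N,
    SamePart (S.π ℓ) i j ↔ ‖x i - x j‖ ≤ (q : ℝ) ^ (-(mval n (ℓ + 1)))) ∧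
  (∀ i j : Fin N, i ≠ j → ∃ ℓ < S.L, ‖x i - x j‖ = (q : ℝ) ^ (-(mval n (ℓ + 1)))) ∧
  (∀ ℓ < S.L, ∃ i j : Fin N, i ≠ j ∧ ‖x i - x j‖ = (q : ℝ) ^ (-(mval n (ℓ + 1))))

lemma pairFinset_nonempty {N : ℕ} (hN : 2 ≤ N) : (pairFinset N).Nonempty := by
  refine ⟨(⟨0, by omega⟩, ⟨1, by omega⟩), ?_⟩
  simp only [pairFinset, Finset.mem_filter, Finset.mem_univ, true_and]
  exact Fin.mk_lt_mk.mpr (by omega)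

/-- The diameter `max_{i<j} ‖x_i − x_j‖`. -/
def maxDist {K : Type*} [NormedField K] {N : ℕ} (hN : 2 ≤ N) (x : Fin N → K) : ℝ :=
  (pairFinset N).sup' (pairFinset_nonempty hN) fun p => ‖x p.1 - x p.2‖

/-- The minimum distance `min_{i<j} ‖x_i − x_j‖`. -/
def minDist {K : Type*} [NormedField K] {N : ℕ} (hN : 2 ≤ N) (x : Fin N → K) : ℝ :=
  (pairFinset N).inf' (pairFinset_nonempty hN) fun p => ‖x p.1 - x p.2‖

namespace SplittingFiltration

variable {N : ℕ} (S : SplittingFiltration N)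

lemma pi_mono : ∀ {m ℓ : ℕ}, m ≤ ℓ → S.π ℓ ≤ S.π m := by
  intro m ℓ hmℓ
  induction ℓ with
  | zero => simp_all
  | succ k ih =>
    rcases Nat.lt_or_ge m (k+1) with hm | hm
    · have hk : m ≤ k := by omega
      refine le_trans ?_ (ih hk)
      by_cases hkL : k < S.L
      · exact (S.strict k hkL).le
      · rw [S.bot_eq (k+1) (by omega)]; exact bot_le
    · have : m = k + 1 := by omega
      subst this; exact le_rfl

lemma mem_branches_iff {b : Finset (Fin N)} :
    b ∈ S.branches ↔ 1 < b.card ∧ ∃ ℓ < S.L, b ∈ (S.π ℓ).parts := by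
  simp only [branches, Finset.mem_filter, Finset.mem_biUnion, Finset.mem_range]
  tauto

lemma depth_lt_and_mem {b : Finset (Fin N)} (hb : b ∈ S.branches) :
    S.depth b < S.L ∧ b ∈ (S.π (S.depth b)).parts := by
  obtain ⟨_, ℓ, hℓ, hmem⟩ := (S.mem_branches_iff).mp hb
  have hne : {ℓ | ℓ < S.L ∧ b ∈ (S.π ℓ).parts}.Nonempty := ⟨ℓ, hℓ, hmem⟩
  have hbdd : BddAbove {ℓ | ℓ < S.L ∧ b ∈ (S.π ℓ).parts} := ⟨S.L, fun x hx => hx.1.le⟩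
  exact Nat.sSup_mem hne hbdd

lemma le_depth {b : Finset (Fin N)} {ℓ : ℕ} (hℓ : ℓ < S.L) (hmem : b ∈ (S.π ℓ).parts) :
    ℓ ≤ S.depth b :=
  le_csSup ⟨S.L, fun x hx => hx.1.le⟩ ⟨hℓ, hmem⟩

lemma one_lt_card_of_branch {b : Finset (Fin N)} (hb : b ∈ S.branches) : 1 < b.card :=
  ((S.mem_branches_iff).mp hb).1

lemma not_mem_parts_succ_depth {b : Finset (Fin N)} (hb : b ∈ S.branches) :
    b ∉ (S.π (S.depth b + 1)).parts := by
  intro hc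
  by_cases hL : S.depth b + 1 < S.L
  · have := S.le_depth hL hc; omega
  · rw [S.bot_eq _ (by omega), Finpartition.mem_bot_iff] at hc
    obtain ⟨a, _, rfl⟩ := hc
    have := S.one_lt_card_of_branch hb
    simp at this

/-- If a part `d` at level `ℓ' ≤ depth b` shares an element with `b`, then `b ⊆ d`. -/
lemma subset_of_level_le {b d : Finset (Fin N)} (hb : b ∈ S.branches) {ℓ' : ℕ}
    (hd : d ∈ (S.π ℓ').parts) {i : Fin N} (hib : i ∈ b) (hid : i ∈ d)
    (hℓd : ℓ' ≤ S.depth b) : b ⊆ d := by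
  obtain ⟨_, hbp⟩ := S.depth_lt_and_mem hb
  obtain ⟨e, he, hbe⟩ := S.pi_mono hℓd hbp
  have : d = e := (S.π ℓ').eq_of_mem_parts hd he hid (hbe hib)
  exact this ▸ hbe

/-- Any branch strictly contained in `b` lives strictly below `depth b`. -/
lemma depth_lt_of_ssubset {b d : Finset (Fin N)} (hb : b ∈ S.branches) {ℓ' : ℕ}
    (hd : d ∈ (S.π ℓ').parts) (hdb : d ⊂ b) : S.depth b < ℓ' := by
  by_contra hcon
  obtain ⟨i, hid⟩ := (S.π ℓ').nonempty_of_mem_parts hd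
  exact hdb.not_subset (S.subset_of_level_le hb hd (hdb.subset hid) hid (by omega))

/-- A part at level `depth b + 1` sharing an element with `b` is contained in `b`. -/
lemma part_succ_subset {b e : Finset (Fin N)} (hb : b ∈ S.branches)
    (he : e ∈ (S.π (S.depth b + 1)).parts) {i : Fin N} (hie : i ∈ e) (hib : i ∈ b) :
    e ⊆ b := by
  obtain ⟨_, hbp⟩ := S.depth_lt_and_mem hb
  obtain ⟨f, hf, hef⟩ := S.pi_mono (Nat.le_succ _) he
  have : f = b := (S.π (S.depth b)).eq_of_mem_parts hf hbp (hef hie) hib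
  exact this ▸ hef

/-- Intrinsic characterization of the parts of level `depth b + 1` inside `b`. -/
lemma part_succ_depth_iff {b : Finset (Fin N)} (hb : b ∈ S.branches) (c : Finset (Fin N)) :
    (c ∈ (S.π (S.depth b + 1)).parts ∧ c ⊆ b) ↔
      ((c ∈ S.branches ∧ c ⊂ b ∧ ∀ d ∈ S.branches, c ⊆ d → d ⊂ b → d = c) ∨
        (∃ i ∈ b, c = {i} ∧ ∀ d ∈ S.branches, d ⊂ b → i ∉ d)) := by
  constructor
  · rintro ⟨hc, hcb⟩
    have hcne : c.Nonempty := (S.π _).nonempty_of_mem_parts hc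
    have hcb' : c ⊂ b := by
      refine Finset.ssubset_iff_subset_ne.mpr ⟨hcb, ?_⟩
      rintro rfl; exact S.not_mem_parts_succ_depth hb hc
    by_cases h1 : 1 < c.card
    · left
      have hL : S.depth b + 1 < S.L := by
        by_contra hL
        rw [S.bot_eq _ (by omega), Finpartition.mem_bot_iff] at hc
        obtain ⟨a, _, rfl⟩ := hc; simp at h1
      refine ⟨(S.mem_branches_iff).mpr ⟨h1, _, hL, hc⟩, hcb', ?_⟩
      intro d hd hcd hdb
      obtain ⟨_, ℓ', hℓ', hdp⟩ := (S.mem_branches_iff).mp hd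
      have hgt := S.depth_lt_of_ssubset hb hdp hdb
      obtain ⟨e, he, hde⟩ := S.pi_mono (show S.depth b + 1 ≤ ℓ' by omega) hdp
      obtain ⟨x, hx⟩ := hcne
      have : c = e := (S.π _).eq_of_mem_parts hc he hx (hde (hcd hx))
      exact Finset.Subset.antisymm (this ▸ hde) hcd
    · right
      obtain ⟨i, rfl⟩ := Finset.card_eq_one.mp
        (Nat.le_antisymm (by omega) (Finset.one_le_card.mpr hcne))
      refine ⟨i, hcb (Finset.mem_singleton_self i), rfl, ?_⟩
      intro d hd hdb hid
      obtain ⟨h1d, ℓ', hℓ', hdp⟩ := (S.mem_branches_iff).mp hd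
      have hgt := S.depth_lt_of_ssubset hb hdp hdb
      obtain ⟨e, he, hde⟩ := S.pi_mono (show S.depth b + 1 ≤ ℓ' by omega) hdp
      have : ({i} : Finset (Fin N)) = e :=
        (S.π _).eq_of_mem_parts hc he (Finset.mem_singleton_self i) (hde hid)
      have hd1 : d ⊆ {i} := this ▸ hde
      have := Finset.card_le_card hd1
      simp at this; omega
  · rintro (⟨hcB, hcb, hmax⟩ | ⟨i, hib, rfl, hno⟩)
    · obtain ⟨h1c, ℓ', hℓ', hcp⟩ := (S.mem_branches_iff).mp hcB
      have hgt := S.depth_lt_of_ssubset hb hcp hcb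
      obtain ⟨e, he, hce⟩ := S.pi_mono (show S.depth b + 1 ≤ ℓ' by omega) hcp
      obtain ⟨x, hx⟩ : c.Nonempty := Finset.card_pos.mp (by omega)
      have heb : e ⊆ b := S.part_succ_subset hb he (hce hx) (hcb.subset hx)
      have h1e : 1 < e.card := lt_of_lt_of_le h1c (Finset.card_le_card hce)
      have hL : S.depth b + 1 < S.L := by
        by_contra hL
        rw [S.bot_eq _ (by omega), Finpartition.mem_bot_iff] at he
        obtain ⟨a, _, rfl⟩ := he; simp at h1e
      have heB : e ∈ S.branches := (S.mem_branches_iff).mpr ⟨h1e, _, hL, he⟩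
      have hesb : e ⊂ b := by
        refine Finset.ssubset_iff_subset_ne.mpr ⟨heb, ?_⟩
        rintro rfl; exact S.not_mem_parts_succ_depth hb he
      have : e = c := hmax e heB hce hesb
      exact this ▸ ⟨he, heb⟩
    · obtain ⟨e, he, hie⟩ := (S.π (S.depth b + 1)).exists_mem (Finset.mem_univ i)
      have heb : e ⊆ b := S.part_succ_subset hb he hie hib
      have hei : e = {i} := by
        by_cases h1e : 1 < e.card
        · have hL : S.depth b + 1 < S.L := by
            by_contra hL
            rw [S.bot_eq _ (by omega), Finpartition.mem_bot_iff] at he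
            obtain ⟨a, _, rfl⟩ := he; simp at h1e
          have heB : e ∈ S.branches := (S.mem_branches_iff).mpr ⟨h1e, _, hL, he⟩
          have hesb : e ⊂ b := by
            refine Finset.ssubset_iff_subset_ne.mpr ⟨heb, ?_⟩
            rintro rfl; exact S.not_mem_parts_succ_depth hb he
          exact absurd hie (hno e heB hesb)
        · exact Finset.eq_singleton_iff_unique_mem.mpr
            ⟨hie, fun x hx => Finset.card_le_one.mp (by omega) x hx i hie⟩
      exact ⟨hei ▸ he, Finset.singleton_subset_iff.mpr hib⟩

end SplittingFiltration

/-- filtrations with equal branch sets have equal branch degrees. -/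
theorem deg_eq_of_branches_eq (N : ℕ) (hN : 2 ≤ N)
    (S S' : SplittingFiltration N) (h : S.branches = S'.branches)
    (b : Finset (Fin N)) (hb : b ∈ S.branches) :
    S.deg b = S'.deg b := by
  have hb' : b ∈ S'.branches := h ▸ hb
  have key : (S.π (S.depth b + 1)).parts.filter (fun c => c ⊆ b)
      = (S'.π (S'.depth b + 1)).parts.filter (fun c => c ⊆ b) := by
    ext c
    simp only [Finset.mem_filter]
    rw [S.part_succ_depth_iff hb c, S'.part_succ_depth_iff hb' c, h]
  rw [SplittingFiltration.deg, SplittingFiltration.deg, key]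
end
end

section
/- For all N ≥ 2, the number of reduced splitting filtrations of order N is at least (N−1)!, i.e., (N−1)! ≤ #R_N ≤ #S_N. -/
open Finset MeasureTheory

noncomputable section

/-! ### Auxiliary material for `card_bounds` -/

section CardBoundsAux

lemma pi_strictAnti {N : ℕ} (S : SplittingFiltration N) (a : ℕ) :
    ∀ b, a < b → b ≤ S.L → S.π b < S.π a := by
  intro b
  induction b with
  | zero => omega
  | succ b ih =>
    intro hab hbL
    have h1 : S.π (b + 1) < S.π b := S.strict b (by omega)
    rcases Nat.lt_succ_iff_lt_or_eq.mp hab with h | h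
    · exact h1.trans (ih h (by omega))
    · subst h; exact h1

lemma L_lt_card {N : ℕ} (S : SplittingFiltration N) :
    S.L < Fintype.card (Finpartition (Finset.univ : Finset (Fin N))) := by
  have hinj : Function.Injective (fun ℓ : Fin (S.L + 1) => S.π ℓ) := by
    intro i j h
    by_contra hne
    have hne' : (i : ℕ) ≠ (j : ℕ) := fun hc => hne (Fin.ext hc)
    rcases hne'.lt_or_gt with hij | hij
    · exact absurd h.symm (ne_of_lt (pi_strictAnti S i j hij (by omega)))
    · exact absurd h (ne_of_lt (pi_strictAnti S j i hij (by omega)))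
  have := Fintype.card_le_of_injective _ hinj
  simpa using this

instance splitting_finite (N : ℕ) : Finite (SplittingFiltration N) := by
  set C := Fintype.card (Finpartition (Finset.univ : Finset (Fin N))) with hC
  apply Finite.of_injective (fun S : SplittingFiltration N =>
    ((⟨S.L, L_lt_card S⟩ : Fin C), fun ℓ : Fin C => S.π ℓ))
  intro S T h
  simp only [Prod.mk.injEq, Fin.mk.injEq] at h
  obtain ⟨hL, hfun⟩ := h
  have hπ : S.π = T.π := by
    funext ℓ
    by_cases hℓ : ℓ < C
    · exact congrFun hfun ⟨ℓ, hℓ⟩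
    · rw [S.bot_eq ℓ (by have := L_lt_card S; omega),
        T.bot_eq ℓ (by have := L_lt_card T; rw [← hC] at this; omega)]
  cases S; cases T
  simp only [SplittingFiltration.mk.injEq]
  exact ⟨hL, hπ⟩

variable (M : ℕ) (σ : Equiv.Perm (Fin (M + 1)))

/-- The big block at level `ℓ`: `{0} ∪ {(σ t).succ : ℓ ≤ t}`. -/
def bigBlock (ℓ : ℕ) : Finset (Fin (M + 2)) :=
  insert 0 ((Finset.univ.filter fun t : Fin (M + 1) => ℓ ≤ (t : ℕ)).image
    fun t => (σ t).succ)

lemma zero_mem_bigBlock (ℓ : ℕ) : (0 : Fin (M + 2)) ∈ bigBlock M σ ℓ :=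
  Finset.mem_insert_self _ _

lemma succ_mem_bigBlock {i : Fin (M + 1)} {ℓ : ℕ} :
    i.succ ∈ bigBlock M σ ℓ ↔ ℓ ≤ (σ.symm i : ℕ) := by
  simp only [bigBlock, Finset.mem_insert, Finset.mem_image, Finset.mem_filter,
    Finset.mem_univ, true_and]
  constructor
  · rintro (h | ⟨t, ht, hts⟩)
    · exact absurd h (Fin.succ_ne_zero i)
    · have : σ t = i := Fin.succ_injective _ hts
      subst this
      rwa [Equiv.symm_apply_apply]
  · intro h
    exact Or.inr ⟨σ.symm i, h, by rw [Equiv.apply_symm_apply]⟩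

lemma apply_succ_mem_bigBlock {t : Fin (M + 1)} {ℓ : ℕ} :
    (σ t).succ ∈ bigBlock M σ ℓ ↔ ℓ ≤ (t : ℕ) := by
  rw [succ_mem_bigBlock, Equiv.symm_apply_apply]

lemma bigBlock_anti {ℓ ℓ' : ℕ} (h : ℓ ≤ ℓ') : bigBlock M σ ℓ' ⊆ bigBlock M σ ℓ := by
  intro x hx
  induction x using Fin.cases with
  | zero => exact zero_mem_bigBlock M σ ℓ
  | succ i =>
    rw [succ_mem_bigBlock] at hx ⊢
    omega

lemma one_lt_card_bigBlock {ℓ : ℕ} (hℓ : ℓ ≤ M) : 1 < (bigBlock M σ ℓ).card := by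
  rw [Finset.one_lt_card]
  refine ⟨0, zero_mem_bigBlock M σ ℓ, (σ ⟨M, by omega⟩).succ, ?_, ?_⟩
  · rw [apply_succ_mem_bigBlock]; exact hℓ
  · exact (Fin.succ_ne_zero _).symm

lemma bigBlock_injOn {ℓ ℓ' : ℕ} (hℓ : ℓ ≤ M) (hℓ' : ℓ' ≤ M)
    (h : bigBlock M σ ℓ = bigBlock M σ ℓ') : ℓ = ℓ' := by
  by_contra hne
  rcases Nat.lt_or_ge ℓ ℓ' with hlt | hge
  · have h1 : (σ ⟨ℓ, by omega⟩).succ ∈ bigBlock M σ ℓ := by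
      rw [apply_succ_mem_bigBlock]
    rw [h, apply_succ_mem_bigBlock] at h1
    simp at h1; omega
  · have hlt : ℓ' < ℓ := by omega
    have h1 : (σ ⟨ℓ', by omega⟩).succ ∈ bigBlock M σ ℓ' := by
      rw [apply_succ_mem_bigBlock]
    rw [← h, apply_succ_mem_bigBlock] at h1
    simp at h1; omega

lemma bigBlock_of_ge {ℓ : ℕ} (hℓ : M + 1 ≤ ℓ) : bigBlock M σ ℓ = {0} := by
  ext x
  rw [Finset.mem_singleton]
  induction x using Fin.cases with
  | zero => simp [zero_mem_bigBlock]
  | succ i =>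
    rw [succ_mem_bigBlock]
    have := (σ.symm i).isLt
    constructor
    · omega
    · intro h; exact absurd h (Fin.succ_ne_zero i)

/-- The parts of the level-`ℓ` partition: the big block plus singletons. -/
def permParts (ℓ : ℕ) : Finset (Finset (Fin (M + 2))) :=
  insert (bigBlock M σ ℓ) (((bigBlock M σ ℓ)ᶜ).image fun i => {i})

lemma mem_permParts {ℓ : ℕ} {b : Finset (Fin (M + 2))} :
    b ∈ permParts M σ ℓ ↔ b = bigBlock M σ ℓ ∨ ∃ i, i ∉ bigBlock M σ ℓ ∧ b = {i} := by
  simp only [permParts, Finset.mem_insert, Finset.mem_image, Finset.mem_compl]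
  constructor
  · rintro (h | ⟨i, hi, rfl⟩)
    · exact Or.inl h
    · exact Or.inr ⟨i, hi, rfl⟩
  · rintro (h | ⟨i, hi, rfl⟩)
    · exact Or.inl h
    · exact Or.inr ⟨i, hi, rfl⟩

/-- The level-`ℓ` partition of `Fin (M+2)` determined by `σ`. -/
def permPart (ℓ : ℕ) : Finpartition (Finset.univ : Finset (Fin (M + 2))) where
  parts := permParts M σ ℓ
  supIndep := by
    rw [Finset.supIndep_iff_pairwiseDisjoint]
    intro a ha b hb hab
    rw [Finset.mem_coe, mem_permParts] at ha hb
    rcases ha with rfl | ⟨i, hi, rfl⟩ <;> rcases hb with rfl | ⟨j, hj, rfl⟩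
    · exact absurd rfl hab
    · exact Finset.disjoint_singleton_right.mpr hj
    · exact Finset.disjoint_singleton_left.mpr hi
    · exact Finset.disjoint_singleton.mpr (fun h => hab (by rw [h]))
  sup_parts := by
    apply Finset.Subset.antisymm (Finset.subset_univ _)
    intro x _
    rw [Finset.mem_sup]
    by_cases hx : x ∈ bigBlock M σ ℓ
    · exact ⟨bigBlock M σ ℓ, Finset.mem_insert_self _ _, hx⟩
    · refine ⟨{x}, ?_, Finset.mem_singleton_self x⟩
      rw [mem_permParts]
      exact Or.inr ⟨x, hx, rfl⟩
  bot_notMem := by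
    rw [mem_permParts]
    rintro (h | ⟨i, _, h⟩)
    · exact absurd (h ▸ zero_mem_bigBlock M σ ℓ) (Finset.notMem_empty _)
    · exact absurd (h ▸ Finset.mem_singleton_self i) (Finset.notMem_empty _)

lemma permPart_le {ℓ : ℕ} : permPart M σ (ℓ + 1) ≤ permPart M σ ℓ := by
  intro b hb
  rw [show (permPart M σ (ℓ + 1)).parts = permParts M σ (ℓ + 1) from rfl,
    mem_permParts] at hb
  rcases hb with rfl | ⟨i, hi, rfl⟩
  · exact ⟨bigBlock M σ ℓ, Finset.mem_insert_self _ _,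
      bigBlock_anti M σ (Nat.le_succ ℓ)⟩
  · by_cases hiℓ : i ∈ bigBlock M σ ℓ
    · exact ⟨bigBlock M σ ℓ, Finset.mem_insert_self _ _,
        Finset.singleton_subset_iff.mpr hiℓ⟩
    · exact ⟨{i}, (mem_permParts M σ).mpr (Or.inr ⟨i, hiℓ, rfl⟩), subset_rfl⟩

lemma permPart_parts_card_one {ℓ : ℕ} {b : Finset (Fin (M + 2))}
    (hb : b ∈ permParts M σ ℓ) (hcard : 1 < b.card) : b = bigBlock M σ ℓ := by
  rcases (mem_permParts M σ).mp hb with rfl | ⟨i, _, rfl⟩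
  · rfl
  · simp at hcard

/-- The splitting filtration associated to a permutation of `Fin (M+1)`. -/
def permFilt : SplittingFiltration (M + 2) where
  L := M + 1
  π := permPart M σ
  top_eq := by
    have hB : bigBlock M σ 0 = Finset.univ := by
      apply Finset.eq_univ_of_forall
      intro x
      induction x using Fin.cases with
      | zero => exact zero_mem_bigBlock M σ 0
      | succ i => exact (succ_mem_bigBlock M σ).mpr (Nat.zero_le _)
    show permParts M σ 0 = {Finset.univ}
    rw [permParts, hB, Finset.compl_univ, Finset.image_empty]
    rfl
  strict := by
    intro ℓ hℓ
    refine lt_of_le_of_ne (permPart_le M σ) ?_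
    intro heq
    have h1 : bigBlock M σ ℓ ∈ permParts M σ ℓ := Finset.mem_insert_self _ _
    have h2 : bigBlock M σ ℓ ∈ permParts M σ (ℓ + 1) := by
      show bigBlock M σ ℓ ∈ (permPart M σ (ℓ + 1)).parts
      rw [heq]; exact h1
    have hcard : 1 < (bigBlock M σ ℓ).card := one_lt_card_bigBlock M σ (by omega)
    have := permPart_parts_card_one M σ h2 hcard
    have h3 : (σ ⟨ℓ, by omega⟩).succ ∈ bigBlock M σ ℓ := by
      rw [apply_succ_mem_bigBlock]
    rw [this, apply_succ_mem_bigBlock] at h3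
    simp at h3
  bot_eq := by
    intro ℓ hℓ
    rw [eq_bot_iff]
    intro b hb
    rw [show (permPart M σ ℓ).parts = permParts M σ ℓ from rfl, mem_permParts,
      bigBlock_of_ge M σ hℓ] at hb
    rcases hb with rfl | ⟨i, _, rfl⟩
    · exact ⟨{0}, Finpartition.mem_bot_iff.mpr ⟨0, Finset.mem_univ _, rfl⟩, subset_rfl⟩
    · exact ⟨{i}, Finpartition.mem_bot_iff.mpr ⟨i, Finset.mem_univ _, rfl⟩, subset_rfl⟩

lemma permFilt_reduced : (permFilt M σ).Reduced := by
  intro b hb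
  have hb' := hb
  rw [SplittingFiltration.branches, Finset.mem_filter] at hb'
  obtain ⟨hmem, hcard⟩ := hb'
  rw [Finset.mem_biUnion] at hmem
  obtain ⟨ℓ, hℓ, hbℓ⟩ := hmem
  rw [Finset.mem_range] at hℓ
  have hℓM : ℓ ≤ M := by
    have : (permFilt M σ).L = M + 1 := rfl
    omega
  have hbig : b = bigBlock M σ ℓ := permPart_parts_card_one M σ hbℓ hcard
  refine ⟨ℓ, ⟨by omega, hbℓ⟩, ?_⟩
  rintro ℓ' ⟨hℓ', hbℓ'⟩
  have hℓ'M : ℓ' ≤ M := by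
    have : (permFilt M σ).L = M + 1 := rfl
    omega
  have hbig' : b = bigBlock M σ ℓ' := permPart_parts_card_one M σ hbℓ' hcard
  exact bigBlock_injOn M σ hℓ'M hℓM (hbig'.symm.trans hbig)

lemma permFilt_injective : Function.Injective (permFilt M) := by
  intro σ τ h
  have hπ : ∀ ℓ, permPart M σ ℓ = permPart M τ ℓ := fun ℓ =>
    congrFun (congrArg SplittingFiltration.π h) ℓ
  have hB : ∀ ℓ, bigBlock M σ ℓ = bigBlock M τ ℓ := by
    intro ℓ
    have h1 : bigBlock M σ ℓ ∈ permParts M τ ℓ := by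
      show bigBlock M σ ℓ ∈ (permPart M τ ℓ).parts
      rw [← hπ ℓ]; exact Finset.mem_insert_self _ _
    rcases (mem_permParts M τ).mp h1 with h' | ⟨i, hi, h'⟩
    · exact h'
    · exfalso
      have h0 : (0 : Fin (M + 2)) ∈ bigBlock M σ ℓ := zero_mem_bigBlock M σ ℓ
      rw [h', Finset.mem_singleton] at h0
      exact hi (h0 ▸ zero_mem_bigBlock M τ ℓ)
  apply Equiv.ext
  intro t
  have h1 : (σ t).succ ∈ bigBlock M τ (t : ℕ) :=
    hB (t : ℕ) ▸ (apply_succ_mem_bigBlock M σ).mpr le_rfl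
  have h2 : (σ t).succ ∉ bigBlock M τ ((t : ℕ) + 1) := by
    rw [← hB ((t : ℕ) + 1), apply_succ_mem_bigBlock]
    omega
  rw [succ_mem_bigBlock] at h1 h2
  have hval : (τ.symm (σ t) : ℕ) = (t : ℕ) := by omega
  have : τ.symm (σ t) = t := Fin.ext hval
  calc σ t = τ (τ.symm (σ t)) := (Equiv.apply_symm_apply τ _).symm
  _ = τ t := by rw [this]

end CardBoundsAux

/-- `(N−1)! ≤ #R_N ≤ #S_N`. -/
theorem card_bounds (N : ℕ) (hN : 2 ≤ N) :
    (N - 1).factorial ≤ Nat.card {S : SplittingFiltration N // S.Reduced} ∧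
      Nat.card {S : SplittingFiltration N // S.Reduced} ≤ Nat.card (SplittingFiltration N) := by
  obtain ⟨M, rfl⟩ : ∃ M, N = M + 2 := ⟨N - 2, by omega⟩
  constructor
  · have hinj : Function.Injective (fun σ : Equiv.Perm (Fin (M + 1)) =>
        (⟨permFilt M σ, permFilt_reduced M σ⟩ :
          {S : SplittingFiltration (M + 2) // S.Reduced})) := by
      intro a b hab
      exact permFilt_injective M (Subtype.ext_iff.mp hab)
    have hle := Nat.card_le_card_of_injective _ hinj
    have hcard : Nat.card (Equiv.Perm (Fin (M + 1))) = (M + 2 - 1).factorial := by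
      rw [Nat.card_eq_fintype_card, Fintype.card_perm, Fintype.card_fin]
      rfl
    rwa [hcard] at hle
  · exact Nat.card_le_card_of_injective Subtype.val Subtype.val_injective
end
end

section
/- Let K be a p-field with residue field cardinality q. If x ∈ T(𝔖, n), then for all a, b ∈ ℂ and s = (s_{ij})_{i<j} ∈ ℂ^{C(N,2)}: (max_{i<j}|x_i−x_j|)^a (min_{i<j}|x_i−x_j|)^b ∏_{i<j}|x_i−x_j|^{s_{ij}} = q^{−(a+b+Σ_{i<j}s_{ij})(n₀−1)} · ∏_{ℓ=1}^{L(𝔖)−1} q^{−(b + E_{𝔖,ℓ}(s) − rank(π_ℓ)) n_ℓ}. -/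
open Finset MeasureTheory

noncomputable section

open scoped Classical

lemma my_cpow_ofReal_pos (r : ℝ) (hr : 0 < r) (a : ℂ) :
    (r:ℂ) ^ a = Complex.exp (a * (Real.log r : ℂ)) := by
  rw [Complex.cpow_def_of_ne_zero (by exact_mod_cast hr.ne'), Complex.ofReal_log hr.le, mul_comm]

lemma my_zpow_cpow (q : ℝ) (hq : 0 < q) (m : ℤ) (a : ℂ) :
    ((q ^ m : ℝ) : ℂ) ^ a = Complex.exp ((a * (m : ℂ)) * (Real.log q : ℂ)) := by
  rw [my_cpow_ofReal_pos _ (zpow_pos hq m), Real.log_zpow]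
  push_cast
  ring_nf

lemma my_nat_cpow (q : ℕ) (hq : 0 < q) (c : ℂ) :
    (q : ℂ) ^ c = Complex.exp (c * (Real.log q : ℂ)) := by
  have h : ((q:ℝ):ℂ) = (q:ℂ) := by push_cast; rfl
  rw [← h, my_cpow_ofReal_pos _ (by exact_mod_cast hq)]

lemma sum_parts_pairSum {N : ℕ} (P : Finpartition (Finset.univ : Finset (Fin N)))
    (s : Fin N → Fin N → ℂ) :
    ∑ b ∈ P.parts, pairSum s b
      = ∑ p ∈ (pairFinset N).filter (fun p => SamePart P p.1 p.2), s p.1 p.2 := by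
  unfold pairSum
  rw [Finset.sum_filter]
  simp_rw [Finset.sum_filter]
  rw [Finset.sum_comm]
  apply Finset.sum_congr rfl
  intro p _
  by_cases h : SamePart P p.1 p.2
  · obtain ⟨b0, hb0, h1, h2⟩ := h
    rw [if_pos ⟨b0, hb0, h1, h2⟩, Finset.sum_eq_single b0]
    · rw [if_pos ⟨h1, h2⟩]
    · intro c hc hne
      rw [if_neg]
      rintro ⟨hc1, hc2⟩
      exact hne (P.eq_of_mem_parts hc hb0 hc1 h1)
    · intro hb0'; exact absurd hb0 hb0'
  · rw [if_neg h, Finset.sum_eq_zero]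
    intro c hc
    rw [if_neg]
    rintro ⟨h1, h2⟩
    exact h ⟨c, hc, h1, h2⟩

lemma pairSum_of_card_le_one {N : ℕ} (s : Fin N → Fin N → ℂ) (b : Finset (Fin N))
    (hb : b.card ≤ 1) : pairSum s b = 0 := by
  have he : (pairFinset N).filter (fun p => p.1 ∈ b ∧ p.2 ∈ b) = ∅ := by
    rw [Finset.filter_eq_empty_iff]
    rintro p hp ⟨h1, h2⟩
    have hlt : p.1 < p.2 := (Finset.mem_filter.mp hp).2
    exact absurd (Finset.card_le_one.mp hb p.1 h1 p.2 h2) hlt.ne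
  rw [pairSum, he, Finset.sum_empty]

lemma sum_card_sub_one {N : ℕ} (P : Finpartition (Finset.univ : Finset (Fin N))) :
    ∑ b ∈ P.parts, ((b.card : ℂ) - 1) = (N : ℂ) - (P.parts.card : ℂ) := by
  rw [Finset.sum_sub_distrib, Finset.sum_const]
  have h : ∑ b ∈ P.parts, (b.card : ℂ) = (N : ℂ) := by
    rw [← Nat.cast_sum]
    have := P.sum_card_parts
    simp only [Finset.card_univ, Fintype.card_fin] at this
    rw [this]
  rw [h]
  simp

lemma prank_cast {N : ℕ} (P : Finpartition (Finset.univ : Finset (Fin N))) :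
    (prank P : ℂ) = (N : ℂ) - (P.parts.card : ℂ) := by
  have h : P.parts.card ≤ N := by simpa using P.card_parts_le_card
  rw [prank, Nat.cast_sub h]

lemma levelExp_sub_prank {N : ℕ} (S : SplittingFiltration N) (s : Fin N → Fin N → ℂ) (ℓ : ℕ) :
    levelExp S s ℓ - (prank (S.π ℓ) : ℂ) = ∑ b ∈ (S.π ℓ).parts, pairSum s b := by
  have e1 : levelExp S s ℓ = ∑ b ∈ (S.π ℓ).parts, branchExp s b := by
    rw [levelExp]
    apply Finset.sum_subset (Finset.filter_subset _ _)
    intro b hb hnb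
    have hpos := ((S.π ℓ).nonempty_of_mem_parts hb).card_pos
    have hcard : b.card = 1 := by
      simp only [Finset.mem_filter, hb, true_and, not_lt] at hnb
      omega
    rw [branchExp, pairSum_of_card_le_one s b hcard.le, hcard]
    simp
  rw [e1]
  simp_rw [branchExp]
  rw [Finset.sum_add_distrib, sum_card_sub_one, prank_cast]
  ring

/-- on `T(𝔖, n)`, the quantity
`(max_{i<j}|x_i−x_j|)^a (min_{i<j}|x_i−x_j|)^b ∏_{i<j}|x_i−x_j|^{s_{ij}}` equals
`q^{−(a+b+Σ_{i<j}s_{ij})(n₀−1)} ∏_{ℓ=1}^{L−1} q^{−(b+E_{𝔖,ℓ}(s)−rank π_ℓ) n_ℓ}`. -/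
theorem value_on_T (K : Type*) [NormedField K] [IsUltrametricDist K]
    (q : ℕ) (hq : 2 ≤ q)
    (hval : ∀ x : K, x ≠ 0 → ∃ m : ℤ, ‖x‖ = (q : ℝ) ^ m)
    (N : ℕ) (hN : 2 ≤ N)
    (S : SplittingFiltration N) (n : ℕ → ℕ) (hn : ∀ ℓ < S.L, 0 < n ℓ)
    (x : Fin N → K) (hx : InT q S n x)
    (a b : ℂ) (s : Fin N → Fin N → ℂ) :
    ((maxDist hN x : ℂ) ^ a) * ((minDist hN x : ℂ) ^ b) *
        ∏ p ∈ pairFinset N, ((‖x p.1 - x p.2‖ : ℂ) ^ s p.1 p.2) =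
      (q : ℂ) ^ (-(a + b + ∑ p ∈ pairFinset N, s p.1 p.2) * ((n 0 : ℂ) - 1)) *
        ∏ ℓ ∈ Finset.Ico 1 S.L,
          (q : ℂ) ^ (-(b + levelExp S s ℓ - (prank (S.π ℓ) : ℂ)) * (n ℓ : ℂ)) := by
  classical
  obtain ⟨-, hiff, hsep, hach⟩ := hx
  have hq1 : (1:ℝ) < (q:ℝ) := by exact_mod_cast (by omega : (1:ℕ) < q)
  have hq0 : (0:ℝ) < (q:ℝ) := lt_trans zero_lt_one hq1
  -- monotonicity of mval
  have hsplit : ∀ a b : ℕ, a ≤ b →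
      ∑ t ∈ Finset.range a, (n t : ℤ) + ∑ t ∈ Finset.Ico a b, (n t : ℤ)
        = ∑ t ∈ Finset.range b, (n t : ℤ) := by
    intro a b hab
    simp only [Finset.range_eq_Ico]
    exact Finset.sum_Ico_consecutive _ (Nat.zero_le a) hab
  have hmono : ∀ a b : ℕ, a ≤ b → b ≤ S.L → mval n a ≤ mval n b := by
    intro a b hab hbL
    rw [mval, mval, sub_le_sub_iff_right]
    have h1 := hsplit a b hab
    have h2 : 0 ≤ ∑ t ∈ Finset.Ico a b, (n t : ℤ) :=
      Finset.sum_nonneg fun t _ => by positivity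
    linarith
  have hstrict : ∀ a b : ℕ, a < b → b ≤ S.L → mval n a < mval n b := by
    intro a b hab hbL
    rw [mval, mval, sub_lt_sub_iff_right]
    have h1 := hsplit a b hab.le
    have h2 : 0 < ∑ t ∈ Finset.Ico a b, (n t : ℤ) := by
      apply Finset.sum_pos
      · intro t ht
        have ht' := Finset.mem_Ico.mp ht
        exact_mod_cast hn t (by omega)
      · exact ⟨a, Finset.mem_Ico.mpr ⟨le_refl a, hab⟩⟩
    linarith
  have hL1 : 1 ≤ S.L := by
    obtain ⟨ℓ, hℓ, -⟩ := hsep ⟨0, by omega⟩ ⟨1, by omega⟩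
      (by intro h; exact absurd (congrArg Fin.val h) (by norm_num))
    omega
  -- choose levels for each pair
  have hkey : ∀ p : Fin N × Fin N, ∃ ℓ : ℕ, p ∈ pairFinset N →
      ℓ < S.L ∧ ‖x p.1 - x p.2‖ = (q:ℝ) ^ (-(mval n (ℓ+1))) ∧
      ∀ ℓ' < S.L, (ℓ' ≤ ℓ ↔ SamePart (S.π ℓ') p.1 p.2) := by
    intro p
    by_cases hp : p ∈ pairFinset N
    · have hne : p.1 ≠ p.2 := ne_of_lt (Finset.mem_filter.mp hp).2
      obtain ⟨ℓ, hℓ, hnorm⟩ := hsep p.1 p.2 hne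
      refine ⟨ℓ, fun _ => ⟨hℓ, hnorm, ?_⟩⟩
      intro ℓ' hℓ'
      rw [hiff ℓ' hℓ' p.1 p.2, hnorm]
      constructor
      · intro h
        exact zpow_le_zpow_right₀ hq1.le
          (neg_le_neg (hmono (ℓ'+1) (ℓ+1) (by omega) (by omega)))
      · intro h
        by_contra hc
        push_neg at hc
        have h2 := zpow_lt_zpow_right₀ hq1
          (neg_lt_neg (hstrict (ℓ+1) (ℓ'+1) (by omega) (by omega)))
        linarith
    · exact ⟨0, fun h => absurd h hp⟩
  choose d hd using hkey
  -- maxDist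
  have hmax : maxDist hN x = (q:ℝ) ^ (-(mval n 1)) := by
    unfold maxDist
    apply le_antisymm
    · apply Finset.sup'_le
      intro p hp
      obtain ⟨hdL, hdn, -⟩ := hd p hp
      rw [hdn]
      exact zpow_le_zpow_right₀ hq1.le
        (neg_le_neg (hmono 1 (d p + 1) (by omega) (by omega)))
    · obtain ⟨i, j, hij, hnorm⟩ := hach 0 (by omega)
      rcases lt_or_gt_of_ne hij with h | h
      · rw [← hnorm]
        have hm : ((i, j) : Fin N × Fin N) ∈ pairFinset N := by
          simp only [pairFinset, Finset.mem_filter, Finset.mem_univ, true_and]; exact h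
        exact Finset.le_sup' (fun p : Fin N × Fin N => ‖x p.1 - x p.2‖) hm
      · rw [← hnorm, norm_sub_rev]
        have hm : ((j, i) : Fin N × Fin N) ∈ pairFinset N := by
          simp only [pairFinset, Finset.mem_filter, Finset.mem_univ, true_and]; exact h
        exact Finset.le_sup' (fun p : Fin N × Fin N => ‖x p.1 - x p.2‖) hm
  -- minDist
  have hmin : minDist hN x = (q:ℝ) ^ (-(mval n S.L)) := by
    unfold minDist
    apply le_antisymm
    · obtain ⟨i, j, hij, hnorm⟩ := hach (S.L - 1) (by omega)
      have hL' : S.L - 1 + 1 = S.L := by omega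
      rw [hL'] at hnorm
      rcases lt_or_gt_of_ne hij with h | h
      · rw [← hnorm]
        have hm : ((i, j) : Fin N × Fin N) ∈ pairFinset N := by
          simp only [pairFinset, Finset.mem_filter, Finset.mem_univ, true_and]; exact h
        exact Finset.inf'_le (fun p : Fin N × Fin N => ‖x p.1 - x p.2‖) hm
      · rw [← hnorm, norm_sub_rev]
        have hm : ((j, i) : Fin N × Fin N) ∈ pairFinset N := by
          simp only [pairFinset, Finset.mem_filter, Finset.mem_univ, true_and]; exact h
        exact Finset.inf'_le (fun p : Fin N × Fin N => ‖x p.1 - x p.2‖) hm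
    · apply Finset.le_inf'
      intro p hp
      obtain ⟨hdL, hdn, -⟩ := hd p hp
      rw [hdn]
      exact zpow_le_zpow_right₀ hq1.le
        (neg_le_neg (hmono (d p + 1) S.L (by omega) le_rfl))
  -- rewrite everything as exponentials
  have hprod1 : ∏ p ∈ pairFinset N, ((‖x p.1 - x p.2‖ : ℂ) ^ s p.1 p.2)
      = Complex.exp (∑ p ∈ pairFinset N,
          (s p.1 p.2 * ((-(mval n (d p + 1)) : ℤ) : ℂ)) * (Real.log q : ℂ)) := by
    rw [Complex.exp_sum]
    apply Finset.prod_congr rfl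
    intro p hp
    obtain ⟨-, hdn, -⟩ := hd p hp
    rw [hdn]
    exact my_zpow_cpow _ hq0 _ _
  have hprod2 : ∏ ℓ ∈ Finset.Ico 1 S.L,
        (q : ℂ) ^ (-(b + levelExp S s ℓ - (prank (S.π ℓ) : ℂ)) * (n ℓ : ℂ))
      = Complex.exp (∑ ℓ ∈ Finset.Ico 1 S.L,
          (-(b + levelExp S s ℓ - (prank (S.π ℓ) : ℂ)) * (n ℓ : ℂ)) * (Real.log q : ℂ)) := by
    rw [Complex.exp_sum]
    exact Finset.prod_congr rfl fun ℓ _ => my_nat_cpow q (by omega) _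
  rw [hmax, hmin, my_zpow_cpow _ hq0 _ a, my_zpow_cpow _ hq0 _ b, hprod1, hprod2,
    my_nat_cpow q (by omega), ← Complex.exp_add, ← Complex.exp_add, ← Complex.exp_add]
  congr 1
  rw [← Finset.sum_mul, ← Finset.sum_mul, ← add_mul, ← add_mul, ← add_mul]
  congr 1
  -- cast facts
  have F1 : ((-(mval n 1) : ℤ) : ℂ) = -((n 0 : ℂ) - 1) := by
    rw [mval]
    push_cast [Finset.sum_range_one]
    ring
  have F2 : ((-(mval n S.L) : ℤ) : ℂ)
      = -(((n 0 : ℂ) - 1) + ∑ ℓ ∈ Finset.Ico 1 S.L, (n ℓ : ℂ)) := by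
    have h0 : ∑ t ∈ Finset.range S.L, (n t : ℤ)
        = (n 0 : ℤ) + ∑ t ∈ Finset.Ico 1 S.L, (n t : ℤ) := by
      rw [Finset.range_eq_Ico]
      exact Finset.sum_eq_sum_Ico_succ_bot (by omega) _
    rw [mval, h0]
    push_cast
    ring
  have F3 : ∀ p ∈ pairFinset N, ((-(mval n (d p + 1)) : ℤ) : ℂ)
      = -(((n 0 : ℂ) - 1) + ∑ ℓ ∈ Finset.Ico 1 S.L, (if ℓ ≤ d p then (n ℓ : ℂ) else 0)) := by
    intro p hp
    obtain ⟨hdL, -, -⟩ := hd p hp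
    have h0 : ∑ t ∈ Finset.range (d p + 1), (n t : ℤ)
        = (n 0 : ℤ) + ∑ t ∈ Finset.Ico 1 (d p + 1), (n t : ℤ) := by
      rw [Finset.range_eq_Ico]
      exact Finset.sum_eq_sum_Ico_succ_bot (by omega) _
    have h1 : ∑ ℓ ∈ Finset.Ico 1 S.L, (if ℓ ≤ d p then (n ℓ : ℂ) else 0)
        = ∑ t ∈ Finset.Ico 1 (d p + 1), (n t : ℂ) := by
      rw [← Finset.sum_filter]
      congr 1
      ext t
      simp only [Finset.mem_filter, Finset.mem_Ico]
      omega
    rw [h1, mval, h0]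
    push_cast
    ring
  have F4 : ∀ ℓ ∈ Finset.Ico 1 S.L,
      ∑ p ∈ pairFinset N, (if ℓ ≤ d p then s p.1 p.2 else 0)
        = levelExp S s ℓ - (prank (S.π ℓ) : ℂ) := by
    intro ℓ hℓ
    rw [levelExp_sub_prank, sum_parts_pairSum, Finset.sum_filter]
    apply Finset.sum_congr rfl
    intro p hp
    obtain ⟨-, -, hiff'⟩ := hd p hp
    exact if_congr (hiff' ℓ (Finset.mem_Ico.mp hℓ).2) rfl rfl
  have hS : ∑ p ∈ pairFinset N, s p.1 p.2 * ((-(mval n (d p + 1)) : ℤ) : ℂ)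
      = -((∑ p ∈ pairFinset N, s p.1 p.2) * ((n 0 : ℂ) - 1))
        - ∑ ℓ ∈ Finset.Ico 1 S.L,
            (levelExp S s ℓ - (prank (S.π ℓ) : ℂ)) * (n ℓ : ℂ) := by
    calc ∑ p ∈ pairFinset N, s p.1 p.2 * ((-(mval n (d p + 1)) : ℤ) : ℂ)
        = ∑ p ∈ pairFinset N, (-(s p.1 p.2 * ((n 0 : ℂ) - 1))
            - ∑ ℓ ∈ Finset.Ico 1 S.L, (if ℓ ≤ d p then s p.1 p.2 * (n ℓ : ℂ) else 0)) := by
          apply Finset.sum_congr rfl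
          intro p hp
          rw [F3 p hp, mul_neg, mul_add, Finset.mul_sum]
          simp only [mul_ite, mul_zero]
          ring
      _ = -((∑ p ∈ pairFinset N, s p.1 p.2) * ((n 0 : ℂ) - 1))
          - ∑ p ∈ pairFinset N, ∑ ℓ ∈ Finset.Ico 1 S.L,
              (if ℓ ≤ d p then s p.1 p.2 * (n ℓ : ℂ) else 0) := by
          rw [Finset.sum_sub_distrib, Finset.sum_neg_distrib, ← Finset.sum_mul]
      _ = -((∑ p ∈ pairFinset N, s p.1 p.2) * ((n 0 : ℂ) - 1))
          - ∑ ℓ ∈ Finset.Ico 1 S.L,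
              (levelExp S s ℓ - (prank (S.π ℓ) : ℂ)) * (n ℓ : ℂ) := by
          congr 1
          rw [Finset.sum_comm]
          apply Finset.sum_congr rfl
          intro ℓ hℓ
          rw [← F4 ℓ hℓ, Finset.sum_mul]
          apply Finset.sum_congr rfl
          intro p hp
          rw [ite_mul, zero_mul]
  have hR : ∑ ℓ ∈ Finset.Ico 1 S.L,
        (-(b + levelExp S s ℓ - (prank (S.π ℓ) : ℂ)) * (n ℓ : ℂ))
      = -(b * ∑ ℓ ∈ Finset.Ico 1 S.L, (n ℓ : ℂ))
        - ∑ ℓ ∈ Finset.Ico 1 S.L,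
            (levelExp S s ℓ - (prank (S.π ℓ) : ℂ)) * (n ℓ : ℂ) := by
    have hc : ∀ ℓ ∈ Finset.Ico 1 S.L,
        -(b + levelExp S s ℓ - (prank (S.π ℓ) : ℂ)) * (n ℓ : ℂ)
          = -(b * (n ℓ : ℂ)) - (levelExp S s ℓ - (prank (S.π ℓ) : ℂ)) * (n ℓ : ℂ) :=
      fun ℓ _ => by ring
    rw [Finset.sum_congr rfl hc, Finset.sum_sub_distrib, Finset.sum_neg_distrib,
      ← Finset.mul_sum]
  rw [F1, F2, hS, hR]
  ring
end
end

section
/- Let q > 1 be an integer and 𝔖* a reduced splitting filtration of order N with M_{𝔖*,q} > 0. Then for every s in the branch polytope BP_{𝔖*}, the sum of the level functions J_{𝔖,q}(0, s) over all splitting filtrations 𝔖 with B(𝔖) = B(𝔖*) equals the branch function I_{𝔖*,q}(s) = (M_{𝔖*,q}/q^{N−1}) ∏_{λ ∈ B(𝔖*), λ ≠ [N]} (q^{e_λ(s)} − 1)^{−1}. -/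
open Finset MeasureTheory

noncomputable section

namespace SFAux

open Finset

variable {N : ℕ}

abbrev Pt (N : ℕ) := Finpartition (Finset.univ : Finset (Fin N))

/-- Non-singleton parts. -/
def nsp (P : Pt N) : Finset (Finset (Fin N)) := P.parts.filter fun b => 1 < b.card

lemma mem_nsp {P : Pt N} {b : Finset (Fin N)} : b ∈ nsp P ↔ b ∈ P.parts ∧ 1 < b.card :=
  Finset.mem_filter

lemma part_nonempty {P : Pt N} {b : Finset (Fin N)} (hb : b ∈ P.parts) : b.Nonempty :=
  P.nonempty_of_mem_parts hb

lemma subset_of_le {P Q : Pt N} (h : P ≤ Q) {b c : Finset (Fin N)} {x : Fin N}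
    (hb : b ∈ P.parts) (hc : c ∈ Q.parts) (hx : x ∈ b) (hxc : x ∈ c) : b ⊆ c := by
  obtain ⟨d, hd, hbd⟩ := h hb
  have : d = c := Q.eq_of_mem_parts hd hc (hbd hx) hxc
  exact this ▸ hbd

lemma exists_superset_of_le {P Q : Pt N} (h : P ≤ Q) {b : Finset (Fin N)}
    (hb : b ∈ P.parts) : ∃ c ∈ Q.parts, b ⊆ c := h hb

lemma eq_of_subset_parts {P : Pt N} {b c : Finset (Fin N)} (hb : b ∈ P.parts)
    (hc : c ∈ P.parts) (h : b ⊆ c) : b = c := by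
  obtain ⟨x, hx⟩ := part_nonempty hb
  exact P.eq_of_mem_parts hb hc hx (h hx)

lemma nsp_bot : nsp (⊥ : Pt N) = ∅ := by
  ext b
  simp only [mem_nsp, Finpartition.mem_bot_iff, Finset.notMem_empty, iff_false, not_and]
  rintro ⟨a, -, rfl⟩
  simp

lemma parts_char {P : Pt N} {b : Finset (Fin N)} :
    b ∈ P.parts ↔ b ∈ nsp P ∨ ∃ x : Fin N, x ∉ (nsp P).biUnion id ∧ b = {x} := by
  constructor
  · intro hb
    by_cases h2 : 1 < b.card
    · exact Or.inl (mem_nsp.2 ⟨hb, h2⟩)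
    · obtain ⟨x, hx⟩ := part_nonempty hb
      have hcard : b.card = 1 := le_antisymm (by omega) (Finset.card_pos.2 ⟨x, hx⟩)
      obtain ⟨y, hy⟩ := Finset.card_eq_one.1 hcard
      refine Or.inr ⟨y, ?_, hy⟩
      intro hmem
      obtain ⟨c, hc, hyc⟩ := Finset.mem_biUnion.1 hmem
      obtain ⟨hc1, hc2⟩ := mem_nsp.1 hc
      have hcb : c = b := P.eq_of_mem_parts hc1 hb hyc (by simp [hy])
      rw [hcb] at hc2
      omega
  · rintro (h | ⟨x, hx, rfl⟩)
    · exact (mem_nsp.1 h).1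
    · obtain ⟨t, ht, hxt⟩ := P.exists_mem (Finset.mem_univ x)
      have hcard : t.card = 1 := by
        by_contra hne
        have h2 : 1 < t.card := by
          have := Finset.card_pos.2 ⟨x, hxt⟩; omega
        exact hx (Finset.mem_biUnion.2 ⟨t, mem_nsp.2 ⟨ht, h2⟩, hxt⟩)
      obtain ⟨y, hy⟩ := Finset.card_eq_one.1 hcard
      have : y = x := by
        subst hy; simpa [eq_comm] using hxt
      subst this
      exact hy ▸ ht

lemma eq_of_nsp_eq {P Q : Pt N} (h : nsp P = nsp Q) : P = Q := by
  apply Finpartition.ext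
  ext b
  rw [parts_char, parts_char, h]

lemma nsp_eq_empty_iff {P : Pt N} : nsp P = ∅ ↔ P = ⊥ := by
  constructor
  · intro h
    exact eq_of_nsp_eq (h.trans nsp_bot.symm)
  · rintro rfl; exact nsp_bot

/-- A partition having `univ` as a part is determined. -/
lemma eq_of_univ_mem {P : Pt N} (h : Finset.univ ∈ P.parts) (Q : Pt N) : Q ≤ P := by
  intro b hb
  exact ⟨Finset.univ, h, Finset.subset_univ b⟩

lemma univ_not_mem_of_lt {P Q : Pt N} (h : Q < P) : Finset.univ ∉ Q.parts := by
  intro hu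
  exact absurd (le_antisymm h.le (eq_of_univ_mem hu P)) h.ne

/-- Each part of the coarser partition is the union of the finer parts inside it. -/
lemma part_eq_biUnion_of_le {P Q : Pt N} (h : P ≤ Q) {c : Finset (Fin N)} (hc : c ∈ Q.parts) :
    c = (P.parts.filter (· ⊆ c)).biUnion id := by
  apply Finset.Subset.antisymm
  · intro x hx
    obtain ⟨t, ht, hxt⟩ := P.exists_mem (Finset.mem_univ x)
    have hsub : t ⊆ c := subset_of_le h ht hc hxt hx
    exact Finset.mem_biUnion.2 ⟨t, Finset.mem_filter.2 ⟨ht, hsub⟩, hxt⟩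
  · intro x hx
    obtain ⟨t, ht, hxt⟩ := Finset.mem_biUnion.1 hx
    exact (Finset.mem_filter.1 ht).2 hxt

lemma parts_card_lt_of_lt {P Q : Pt N} (h : P < Q) : Q.parts.card < P.parts.card := by
  refine lt_of_le_of_ne (Finpartition.card_mono h.le) ?_
  intro hcard
  apply h.ne
  -- fibers
  have hdisj : ∀ c₁ ∈ Q.parts, ∀ c₂ ∈ Q.parts, c₁ ≠ c₂ →
      Disjoint (P.parts.filter (· ⊆ c₁)) (P.parts.filter (· ⊆ c₂)) := by
    intro c₁ hc₁ c₂ hc₂ hne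
    rw [Finset.disjoint_left]
    intro b hb₁ hb₂
    obtain ⟨hbP, hb₁'⟩ := Finset.mem_filter.1 hb₁
    obtain ⟨-, hb₂'⟩ := Finset.mem_filter.1 hb₂
    obtain ⟨x, hx⟩ := part_nonempty hbP
    exact hne (Q.eq_of_mem_parts hc₁ hc₂ (hb₁' hx) (hb₂' hx))
  have hcover : P.parts = Q.parts.biUnion (fun c => P.parts.filter (· ⊆ c)) := by
    ext b
    simp only [Finset.mem_biUnion, Finset.mem_filter]
    constructor
    · intro hb
      obtain ⟨c, hc, hbc⟩ := h.le hb
      exact ⟨c, hc, hb, hbc⟩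
    · rintro ⟨c, hc, hb, -⟩; exact hb
  have hsum : P.parts.card = ∑ c ∈ Q.parts, (P.parts.filter (· ⊆ c)).card := by
    conv_lhs => rw [hcover]
    exact Finset.card_biUnion hdisj
  have hfib1 : ∀ c ∈ Q.parts, (P.parts.filter (· ⊆ c)).card = 1 := by
    have hpos : ∀ c ∈ Q.parts, 1 ≤ (P.parts.filter (· ⊆ c)).card := by
      intro c hc
      obtain ⟨b, hb, hbc⟩ := Finpartition.exists_le_of_le h.le hc
      exact Finset.card_pos.2 ⟨b, Finset.mem_filter.2 ⟨hb, hbc⟩⟩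
    by_contra hcon
    push_neg at hcon
    obtain ⟨c₀, hc₀, hne⟩ := hcon
    have hlt : ∑ _c ∈ Q.parts, 1 < ∑ c ∈ Q.parts, (P.parts.filter (· ⊆ c)).card :=
      Finset.sum_lt_sum hpos ⟨c₀, hc₀, by have := hpos c₀ hc₀; omega⟩
    simp only [Finset.sum_const, smul_eq_mul, mul_one] at hlt
    omega
  have hsubQ : Q.parts ⊆ P.parts := by
    intro c hc
    obtain ⟨b, hb⟩ := Finset.card_eq_one.1 (hfib1 c hc)
    have hcb : c = b := by
      have := part_eq_biUnion_of_le h.le hc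
      rw [hb] at this
      simpa using this
    have hbP : b ∈ P.parts := by
      have : b ∈ P.parts.filter (· ⊆ c) := by rw [hb]; exact Finset.mem_singleton_self b
      exact (Finset.mem_filter.1 this).1
    exact hcb ▸ hbP
  exact (Finpartition.ext (Finset.eq_of_subset_of_card_le hsubQ (le_of_eq hcard.symm)).symm)

end SFAux

namespace SFAux

open Finset

variable {N : ℕ}

section Chain

variable {π : ℕ → Pt N} {L : ℕ}

lemma chain_mono (hstrict : ∀ ℓ < L, π (ℓ + 1) < π ℓ) (hbot : ∀ ℓ, L ≤ ℓ → π ℓ = ⊥)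
    {a b : ℕ} (h : a ≤ b) : π b ≤ π a := by
  induction b, h using Nat.le_induction with
  | base => exact le_rfl
  | succ b hab ih =>
    refine le_trans ?_ ih
    by_cases hb : b < L
    · exact (hstrict b hb).le
    · rw [hbot (b+1) (by omega)]
      exact bot_le

lemma chain_interval (hstrict : ∀ ℓ < L, π (ℓ + 1) < π ℓ) (hbot : ∀ ℓ, L ≤ ℓ → π ℓ = ⊥)
    {a k b : ℕ} (hak : a ≤ k) (hkb : k ≤ b) {t : Finset (Fin N)}
    (ha : t ∈ (π a).parts) (hb : t ∈ (π b).parts) : t ∈ (π k).parts := by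
  obtain ⟨c, hc, htc⟩ := (chain_mono hstrict hbot hkb) hb
  obtain ⟨d, hd, hcd⟩ := (chain_mono hstrict hbot hak) hc
  have htd : t = d := eq_of_subset_parts ha hd (htc.trans hcd)
  have : c = t := Finset.Subset.antisymm (htd ▸ hcd) htc
  exact this ▸ hc

/-- If `u` lives at a level not later than `t`'s level and `u ⊆ t`, then `u = t`. -/
lemma chain_push (hstrict : ∀ ℓ < L, π (ℓ + 1) < π ℓ) (hbot : ∀ ℓ, L ≤ ℓ → π ℓ = ⊥)
    {a b : ℕ} (hba : b ≤ a) {t u : Finset (Fin N)}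
    (ht : t ∈ (π a).parts) (hu : u ∈ (π b).parts) (hsub : u ⊆ t) : u = t := by
  obtain ⟨e, he, hte⟩ := (chain_mono hstrict hbot hba) ht
  obtain ⟨x, hx⟩ := part_nonempty hu
  have hue : u = e := (π b).eq_of_mem_parts hu he hx (hte (hsub hx))
  have : t ⊆ u := hue ▸ hte
  exact Finset.Subset.antisymm hsub this

end Chain

/-- A chain of partitions. -/
@[ext]
structure GChain (N : ℕ) where
  L : ℕ
  π : ℕ → Pt N
  strict : ∀ ℓ < L, π (ℓ + 1) < π ℓ
  bot_eq : ∀ ℓ, L ≤ ℓ → π ℓ = ⊥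

namespace GChain

def branches (C : GChain N) : Finset (Finset (Fin N)) :=
  ((Finset.range C.L).biUnion fun ℓ => (C.π ℓ).parts).filter fun b => 1 < b.card

lemma mem_branches {C : GChain N} {b : Finset (Fin N)} :
    b ∈ C.branches ↔ (∃ ℓ < C.L, b ∈ (C.π ℓ).parts) ∧ 1 < b.card := by
  simp [branches, Finset.mem_filter, Finset.mem_biUnion, Finset.mem_range]

lemma nsp_mem_branches {C : GChain N} {ℓ : ℕ} (hℓ : ℓ < C.L) {b : Finset (Fin N)}
    (hb : b ∈ nsp (C.π ℓ)) : b ∈ C.branches := by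
  obtain ⟨h1, h2⟩ := mem_nsp.1 hb
  exact mem_branches.2 ⟨⟨ℓ, hℓ, h1⟩, h2⟩

lemma L_pos (C : GChain N) (hP : C.π 0 ≠ ⊥) : 0 < C.L := by
  rcases Nat.eq_zero_or_pos C.L with h | h
  · exact absurd (C.bot_eq 0 (by omega)) hP
  · exact h

lemma nsp_start_subset (C : GChain N) : nsp (C.π 0) ⊆ C.branches := by
  rcases Nat.eq_zero_or_pos C.L with h | h
  · have : C.π 0 = ⊥ := C.bot_eq 0 (by omega)
    have h2 : nsp (C.π 0) = ∅ := by rw [this]; exact nsp_bot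
    rw [h2]
    exact Finset.empty_subset _
  · intro b hb
    exact nsp_mem_branches h hb

lemma branches_laminar (C : GChain N) {b c : Finset (Fin N)}
    (hb : b ∈ C.branches) (hc : c ∈ C.branches) : b ⊆ c ∨ c ⊆ b ∨ Disjoint b c := by
  obtain ⟨⟨ℓ, hℓ, hbp⟩, -⟩ := mem_branches.1 hb
  obtain ⟨⟨m, hm, hcp⟩, -⟩ := mem_branches.1 hc
  rcases le_total ℓ m with h | h
  · by_cases hd : Disjoint b c
    · exact Or.inr (Or.inr hd)
    · obtain ⟨x, hxb, hxc⟩ := Finset.not_disjoint_iff.1 hd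
      exact Or.inr (Or.inl (subset_of_le (chain_mono C.strict C.bot_eq h) hcp hbp hxc hxb))
  · by_cases hd : Disjoint b c
    · exact Or.inr (Or.inr hd)
    · obtain ⟨x, hxb, hxc⟩ := Finset.not_disjoint_iff.1 hd
      exact Or.inl (subset_of_le (chain_mono C.strict C.bot_eq h) hbp hcp hxb hxc)

lemma L_le (C : GChain N) : C.L + (C.π 0).parts.card ≤ N := by
  have key : ∀ ℓ ≤ C.L, ℓ + (C.π 0).parts.card ≤ (C.π ℓ).parts.card := by
    intro ℓ hℓ
    induction ℓ with
    | zero => simp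
    | succ m ih =>
      have hm : m < C.L := by omega
      have h1 := parts_card_lt_of_lt (C.strict m hm)
      have h2 := ih (by omega)
      omega
  have h1 := key C.L le_rfl
  have h2 : (C.π C.L) = ⊥ := C.bot_eq C.L le_rfl
  have h3 : (C.π C.L).parts.card = N := by
    rw [h2]
    simp [Finpartition.card_bot (Finset.univ : Finset (Fin N))]
  omega

instance finite : Finite (GChain N) := by
  have : Function.Injective
      (fun C : GChain N => ((⟨C.L, by have := C.L_le; omega⟩ : Fin (N+1)),
        fun ℓ : Fin (N + 1) => C.π ℓ)) := by
    intro C D h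
    obtain ⟨h1, h2⟩ := Prod.mk.injEq .. ▸ h
    have hL : C.L = D.L := by
      have := congrArg Fin.val h1
      simpa using this
    have hπ : C.π = D.π := by
      funext ℓ
      by_cases hℓ : ℓ ≤ N
      · exact congrFun h2 ⟨ℓ, by omega⟩
      · have hC : C.L ≤ ℓ := by have := C.L_le; omega
        have hD : D.L ≤ ℓ := by have := D.L_le; omega
        rw [C.bot_eq ℓ hC, D.bot_eq ℓ hD]
    cases C; cases D
    simp_all
  exact Finite.of_injective _ this

noncomputable instance fintypeSub (P : Pt N) (F : Finset (Finset (Fin N))) :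
    Fintype {C : GChain N // C.π 0 = P ∧ C.branches = F} := Fintype.ofFinite _

end GChain

end SFAux

namespace SFAux

open Finset

variable {N : ℕ}

/-- Maximal proper subsets of `b` within the family `F`. -/
def maxSub (F : Finset (Finset (Fin N))) (b : Finset (Fin N)) : Finset (Finset (Fin N)) :=
  F.filter (fun c => c ⊂ b ∧ ∀ c' ∈ F, c ⊂ c' → ¬ c' ⊂ b)

lemma mem_maxSub {F : Finset (Finset (Fin N))} {b c : Finset (Fin N)} :
    c ∈ maxSub F b ↔ c ∈ F ∧ c ⊂ b ∧ ∀ c' ∈ F, c ⊂ c' → ¬ c' ⊂ b := by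
  simp [maxSub, Finset.mem_filter, and_assoc]

lemma exists_maxSub {F : Finset (Finset (Fin N))} {b c : Finset (Fin N)}
    (hc : c ∈ F) (hcb : c ⊂ b) : ∃ m ∈ maxSub F b, c ⊆ m := by
  obtain ⟨m, hm, hmax⟩ := Finset.exists_max_image
    (F.filter (fun c' => c ⊆ c' ∧ c' ⊂ b)) Finset.card
    ⟨c, Finset.mem_filter.2 ⟨hc, le_rfl, hcb⟩⟩
  obtain ⟨hmF, hcm, hmb⟩ := Finset.mem_filter.1 hm
  refine ⟨m, mem_maxSub.2 ⟨hmF, hmb, ?_⟩, hcm⟩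
  intro c' hc' hmc' hc'b
  have h1 : c' ∈ F.filter (fun c' => c ⊆ c' ∧ c' ⊂ b) :=
    Finset.mem_filter.2 ⟨hc', hcm.trans hmc'.subset, hc'b⟩
  have h2 := hmax c' h1
  have := Finset.card_lt_card hmc'
  omega

lemma maxSub_disjoint {F : Finset (Finset (Fin N))}
    (hlam : ∀ b ∈ F, ∀ c ∈ F, b ⊆ c ∨ c ⊆ b ∨ Disjoint b c) {b c₁ c₂ : Finset (Fin N)}
    (h₁ : c₁ ∈ maxSub F b) (h₂ : c₂ ∈ maxSub F b) (hne : c₁ ≠ c₂) : Disjoint c₁ c₂ := by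
  obtain ⟨hF₁, hb₁, hmax₁⟩ := mem_maxSub.1 h₁
  obtain ⟨hF₂, hb₂, hmax₂⟩ := mem_maxSub.1 h₂
  rcases hlam c₁ hF₁ c₂ hF₂ with h | h | h
  · exact absurd hb₂ (hmax₁ c₂ hF₂ (ssubset_of_subset_of_ne h hne))
  · exact absurd hb₁ (hmax₂ c₁ hF₁ (ssubset_of_subset_of_ne h hne.symm))
  · exact h

lemma maxSub_subset_biUnion {F : Finset (Finset (Fin N))} {b : Finset (Fin N)} :
    (maxSub F b).biUnion id ⊆ b := by
  intro x hx
  obtain ⟨c, hc, hxc⟩ := Finset.mem_biUnion.1 hx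
  exact (mem_maxSub.1 hc).2.1.subset hxc

namespace SplittingFiltrationAux

open _root_.SplittingFiltration

variable (S : SplittingFiltration N)

lemma mem_branchesS {b : Finset (Fin N)} :
    b ∈ S.branches ↔ (∃ ℓ < S.L, b ∈ (S.π ℓ).parts) ∧ 1 < b.card := by
  simp [SplittingFiltration.branches, Finset.mem_filter, Finset.mem_biUnion, Finset.mem_range]

variable {S}

lemma depth_spec {b : Finset (Fin N)} (hb : b ∈ S.branches) :
    S.depth b < S.L ∧ b ∈ (S.π (S.depth b)).parts := by
  obtain ⟨⟨ℓ, hℓ, hbp⟩, -⟩ := (mem_branchesS S).1 hb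
  have hne : {ℓ | ℓ < S.L ∧ b ∈ (S.π ℓ).parts}.Nonempty := ⟨ℓ, hℓ, hbp⟩
  have hbdd : BddAbove {ℓ | ℓ < S.L ∧ b ∈ (S.π ℓ).parts} := ⟨S.L, fun x hx => hx.1.le⟩
  exact Nat.sSup_mem hne hbdd

lemma depth_le {b : Finset (Fin N)} {ℓ : ℕ} (hℓ : ℓ < S.L) (hbp : b ∈ (S.π ℓ).parts) :
    ℓ ≤ S.depth b :=
  le_csSup ⟨S.L, fun x hx => hx.1.le⟩ ⟨hℓ, hbp⟩

lemma not_mem_depth_succ {b : Finset (Fin N)} (hb : b ∈ S.branches) :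
    b ∉ (S.π (S.depth b + 1)).parts := by
  intro hmem
  obtain ⟨-, hcard⟩ := (mem_branchesS S).1 hb
  by_cases h : S.depth b + 1 < S.L
  · have := depth_le h hmem
    omega
  · have hbot : S.π (S.depth b + 1) = ⊥ := S.bot_eq _ (by omega)
    rw [hbot] at hmem
    obtain ⟨a, -, ha⟩ := Finpartition.mem_bot_iff.1 hmem
    rw [← ha] at hcard
    simp at hcard
  
/-- A branch properly contained in `b` lives strictly below `b`'s depth. -/
lemma level_gt_depth {b c : Finset (Fin N)} (hb : b ∈ S.branches) {m : ℕ}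
    (hm : m < S.L) (hc : c ∈ (S.π m).parts) (hcb : c ⊂ b) : S.depth b < m := by
  by_contra h
  push_neg at h
  have := chain_push S.strict S.bot_eq h (depth_spec hb).2 hc hcb.subset
  exact hcb.ne this

lemma parts_filter_eq {b : Finset (Fin N)} (hb : b ∈ S.branches) :
    (S.π (S.depth b + 1)).parts.filter (fun c => c ⊆ b) =
      maxSub S.branches b ∪
        (b \ (maxSub S.branches b).biUnion id).image (fun x => ({x} : Finset (Fin N))) := by
  obtain ⟨hdL, hdmem⟩ := depth_spec hb
  have hcardb : 1 < b.card := ((mem_branchesS S).1 hb).2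
  -- maximal elements are parts of the next level
  have hmax_mem : ∀ c ∈ maxSub S.branches b, c ∈ (S.π (S.depth b + 1)).parts ∧ c ⊆ b := by
    intro c hcmax
    obtain ⟨hcF, hcb, hmaxc⟩ := mem_maxSub.1 hcmax
    obtain ⟨⟨m, hm, hcp⟩, hccard⟩ := (mem_branchesS S).1 hcF
    have hdm : S.depth b < m := level_gt_depth hb hm hcp hcb
    obtain ⟨f, hf, hcf⟩ := (chain_mono S.strict S.bot_eq (by omega : S.depth b + 1 ≤ m)) hcp
    obtain ⟨x, hxc⟩ := Finset.card_pos.1 (by omega : 0 < c.card)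
    have hfb : f ⊆ b := by
      obtain ⟨g, hg, hfg⟩ := (chain_mono S.strict S.bot_eq (by omega : S.depth b ≤ S.depth b + 1)) hf
      have : g = b := (S.π (S.depth b)).eq_of_mem_parts hg hdmem (hfg (hcf hxc)) (hcb.subset hxc)
      exact this ▸ hfg
    have hfne : f ≠ b := fun h => not_mem_depth_succ hb (h ▸ hf)
    have hfcard : 1 < f.card := lt_of_lt_of_le hccard (Finset.card_le_card hcf)
    have hdL' : S.depth b + 1 < S.L := by
      by_contra h
      have hbot : S.π (S.depth b + 1) = ⊥ := S.bot_eq _ (by omega)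
      rw [hbot] at hf
      obtain ⟨a, -, ha⟩ := Finpartition.mem_bot_iff.1 hf
      rw [← ha] at hfcard
      simp at hfcard
    have hfF : f ∈ S.branches := (mem_branchesS S).2 ⟨⟨_, hdL', hf⟩, hfcard⟩
    have hcf_eq : c = f := by
      by_contra hne
      exact hmaxc f hfF (ssubset_of_subset_of_ne hcf hne) (ssubset_of_subset_of_ne hfb hfne)
    exact ⟨hcf_eq ▸ hf, hcf_eq ▸ (hcf_eq ▸ hfb)⟩
  ext t
  simp only [Finset.mem_filter, Finset.mem_union, Finset.mem_image, Finset.mem_sdiff]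
  constructor
  · rintro ⟨ht, htb⟩
    by_cases hcard : 1 < t.card
    · -- t is a branch properly below b, and maximal
      have hdL' : S.depth b + 1 < S.L := by
        by_contra h
        have hbot : S.π (S.depth b + 1) = ⊥ := S.bot_eq _ (by omega)
        rw [hbot] at ht
        obtain ⟨a, -, ha⟩ := Finpartition.mem_bot_iff.1 ht
        rw [← ha] at hcard
        simp at hcard
      have htF : t ∈ S.branches := (mem_branchesS S).2 ⟨⟨_, hdL', ht⟩, hcard⟩
      have htne : t ≠ b := fun h => not_mem_depth_succ hb (h ▸ ht)
      left
      refine mem_maxSub.2 ⟨htF, ssubset_of_subset_of_ne htb htne, ?_⟩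
      intro c' hc' htc' hc'b
      obtain ⟨⟨m, hm, hcp⟩, -⟩ := (mem_branchesS S).1 hc'
      have hdm : S.depth b < m := level_gt_depth hb hm hcp hc'b
      obtain ⟨f, hf, hcf⟩ := (chain_mono S.strict S.bot_eq (by omega : S.depth b + 1 ≤ m)) hcp
      obtain ⟨x, hxt⟩ := Finset.card_pos.1 (by omega : 0 < t.card)
      have : t = f := (S.π (S.depth b + 1)).eq_of_mem_parts ht hf hxt (hcf (htc'.subset hxt))
      exact htc'.not_subset (this ▸ hcf)
    · -- t is a singleton
      obtain ⟨x, hxt⟩ := part_nonempty ht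
      have hcard1 : t.card = 1 := le_antisymm (by omega) (Finset.card_pos.2 ⟨x, hxt⟩)
      obtain ⟨y, hy⟩ := Finset.card_eq_one.1 hcard1
      right
      refine ⟨y, ⟨htb (hy ▸ Finset.mem_singleton_self y), ?_⟩, hy.symm⟩
      intro hmem
      obtain ⟨c, hc, hyc⟩ := Finset.mem_biUnion.1 hmem
      obtain ⟨hcp, -⟩ := hmax_mem c hc
      have : t = c := (S.π (S.depth b + 1)).eq_of_mem_parts ht hcp (hy ▸ Finset.mem_singleton_self y) hyc
      have hc2 := ((mem_branchesS S).1 (mem_maxSub.1 hc).1).2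
      rw [← this] at hc2
      omega
  · rintro (hmax | ⟨x, ⟨hxb, hxU⟩, rfl⟩)
    · exact ⟨(hmax_mem _ hmax).1, (hmax_mem _ hmax).2⟩
    · -- the part containing x at level depth+1 is the singleton {x}
      obtain ⟨f, hf, hxf⟩ := (S.π (S.depth b + 1)).exists_mem (Finset.mem_univ x)
      have hfb : f ⊆ b := by
        obtain ⟨g, hg, hfg⟩ := (chain_mono S.strict S.bot_eq (by omega : S.depth b ≤ S.depth b + 1)) hf
        have : g = b := (S.π (S.depth b)).eq_of_mem_parts hg hdmem (hfg hxf) hxb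
        exact this ▸ hfg
      have hfsing : f = {x} := by
        by_contra hne
        have hfcard : 1 < f.card := by
          rcases Nat.lt_or_ge 1 f.card with h | h
          · exact h
          · have : f.card = 1 := le_antisymm h (Finset.card_pos.2 ⟨x, hxf⟩)
            obtain ⟨y, hy⟩ := Finset.card_eq_one.1 this
            have : y = x := by have := hxf; rw [hy] at this; simpa [eq_comm] using this
            exact absurd (this ▸ hy) hne
        have hdL' : S.depth b + 1 < S.L := by
          by_contra h
          have hbot : S.π (S.depth b + 1) = ⊥ := S.bot_eq _ (by omega)
          rw [hbot] at hf
          obtain ⟨a, -, ha⟩ := Finpartition.mem_bot_iff.1 hf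
          rw [← ha] at hfcard
          simp at hfcard
        have hfF : f ∈ S.branches := (mem_branchesS S).2 ⟨⟨_, hdL', hf⟩, hfcard⟩
        have hfneb : f ≠ b := fun h => not_mem_depth_succ hb (h ▸ hf)
        obtain ⟨m, hmmax, hfm⟩ := exists_maxSub hfF (ssubset_of_subset_of_ne hfb hfneb)
        exact hxU (Finset.mem_biUnion.2 ⟨m, hmmax, hfm hxf⟩)
      exact ⟨hfsing ▸ hf, by rw [hfsing] at *; simpa using hxb⟩

/-- The degree depends only on the branch set. -/
def degB (F : Finset (Finset (Fin N))) (b : Finset (Fin N)) : ℕ :=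
  (maxSub F b).card + (b \ (maxSub F b).biUnion id).card

lemma deg_eq {b : Finset (Fin N)} (hb : b ∈ S.branches) :
    S.deg b = degB S.branches b := by
  rw [SplittingFiltration.deg, parts_filter_eq hb]
  rw [Finset.card_union_of_disjoint, Finset.card_image_of_injective]
  · rfl
  · intro x y h
    simpa using h
  · rw [Finset.disjoint_right]
    rintro t ht htmax
    obtain ⟨x, -, rfl⟩ := Finset.mem_image.1 ht
    have := ((mem_branchesS S).1 (mem_maxSub.1 htmax).1).2
    simp at this

lemma mult_eq_of_branches_eq (q : ℕ) {S' : SplittingFiltration N} (h : S.branches = S'.branches) :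
    S.mult q = S'.mult q := by
  rw [SplittingFiltration.mult, SplittingFiltration.mult]
  rw [h]
  apply Finset.prod_congr rfl
  intro b hb
  rw [deg_eq (h ▸ hb), deg_eq hb, h]

end SplittingFiltrationAux

end SFAux

namespace SFAux

open Finset

variable {N : ℕ}

section Analytic

variable {q : ℕ} (hq : 1 < q)

include hq in
lemma cpow_sum {ι : Type*} (t : Finset ι) (w : ι → ℂ) :
    (q : ℂ) ^ (∑ b ∈ t, w b) = ∏ b ∈ t, (q : ℂ) ^ (w b) := by
  classical
  induction t using Finset.induction with
  | empty => simp
  | insert a t' hnot ih =>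
    rw [Finset.sum_insert hnot, Finset.prod_insert hnot, ← ih,
      Complex.cpow_add _ _ (by exact_mod_cast (by omega : q ≠ 0))]

include hq in
lemma cpow_ne_one {e : ℂ} (he : 0 < e.re) : (q : ℂ) ^ e ≠ 1 := by
  intro h
  have habs : ‖(q : ℂ) ^ e‖ = (q : ℝ) ^ e.re := by
    have : ((q : ℂ)) = ((q : ℝ) : ℂ) := by norm_num
    rw [this]
    exact Complex.norm_cpow_eq_rpow_re_of_pos (by positivity) e
  rw [h] at habs
  simp only [norm_one] at habs
  have h2 : (1 : ℝ) < (q : ℝ) ^ e.re := by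
    rw [Real.one_lt_rpow_iff (by positivity)]
    exact Or.inl ⟨by exact_mod_cast hq, he⟩
  rw [← habs] at h2
  exact lt_irrefl _ h2

/-- The basic algebraic identity:
`∑_{C ⊊ R} ∏_{b∈C} (x b − 1)⁻¹ = (∏_R x − 1) · ∏_R (x b − 1)⁻¹`. -/
lemma key_identity {ι : Type*} [DecidableEq ι] (R : Finset ι) (x : ι → ℂ)
    (hx : ∀ b ∈ R, x b ≠ 1) :
    ∑ C ∈ R.powerset.erase R, ∏ b ∈ C, (x b - 1)⁻¹ =
      (∏ b ∈ R, x b - 1) * ∏ b ∈ R, (x b - 1)⁻¹ := by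
  have hfull : ∑ C ∈ R.powerset, ∏ b ∈ C, (x b - 1)⁻¹ =
      (∏ b ∈ R, x b) * ∏ b ∈ R, (x b - 1)⁻¹ := by
    have := Finset.prod_add (fun b => (x b - 1)⁻¹) (fun _ => (1 : ℂ)) R
    simp only [Finset.prod_const_one, mul_one] at this
    rw [← Finset.prod_mul_distrib]
    rw [← this]
    apply Finset.prod_congr rfl
    intro b hb
    have hne : x b - 1 ≠ 0 := sub_ne_zero.2 (hx b hb)
    field_simp
    ring
  have hsplit : ∑ C ∈ R.powerset, ∏ b ∈ C, (x b - 1)⁻¹ =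
      (∑ C ∈ R.powerset.erase R, ∏ b ∈ C, (x b - 1)⁻¹) + ∏ b ∈ R, (x b - 1)⁻¹ := by
    rw [← Finset.sum_erase_add R.powerset _ (Finset.mem_powerset_self R)]
  rw [hsplit] at hfull
  linear_combination hfull

end Analytic

end SFAux

namespace SFAux

open Finset

variable {N : ℕ}

def lvlSum (s : Fin N → Fin N → ℂ) (P' : Pt N) : ℂ := ∑ b ∈ nsp P', branchExp s b

def val (q : ℕ) (s : Fin N → Fin N → ℂ) (C : GChain N) : ℂ :=
  ∏ ℓ ∈ Finset.Ico 1 C.L, ((q : ℂ) ^ lvlSum s (C.π ℓ) - 1)⁻¹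

def factor (q : ℕ) (s : Fin N → Fin N → ℂ) (Q : Pt N) : ℂ :=
  if Q = ⊥ then 1 else ((q : ℂ) ^ lvlSum s Q - 1)⁻¹

noncomputable def T (q : ℕ) (s : Fin N → Fin N → ℂ) (P : Pt N)
    (F : Finset (Finset (Fin N))) : ℂ :=
  ∑ C : {C : GChain N // C.π 0 = P ∧ C.branches = F}, val q s C.1

def Compat (P : Pt N) (F : Finset (Finset (Fin N))) : Prop :=
  nsp P ⊆ F ∧ ∀ b ∈ F, ∃ c ∈ P.parts, b ⊆ c

namespace GChain

lemma compat_of_chain (C : GChain N) : Compat (C.π 0) C.branches := by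
  refine ⟨C.nsp_start_subset, ?_⟩
  intro b hb
  obtain ⟨⟨ℓ, hℓ, hbp⟩, -⟩ := mem_branches.1 hb
  exact (chain_mono C.strict C.bot_eq (Nat.zero_le ℓ)) hbp

def peel (C : GChain N) : GChain N where
  L := C.L - 1
  π := fun ℓ => C.π (ℓ + 1)
  strict := fun ℓ hℓ => C.strict (ℓ + 1) (by omega)
  bot_eq := fun ℓ hℓ => C.bot_eq (ℓ + 1) (by omega)

def unpeel (P : Pt N) (C' : GChain N) (hlt : C'.π 0 < P) : GChain N where
  L := C'.L + 1
  π := fun ℓ => Nat.casesOn ℓ P (fun m => C'.π m)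
  strict := fun ℓ hℓ => by
    cases ℓ with
    | zero => exact hlt
    | succ m => exact C'.strict m (by omega)
  bot_eq := fun ℓ hℓ => by
    cases ℓ with
    | zero => omega
    | succ m => exact C'.bot_eq m (by omega)

lemma peel_unpeel (P : Pt N) (C' : GChain N) (hlt : C'.π 0 < P) :
    peel (unpeel P C' hlt) = C' := rfl

lemma unpeel_peel (C : GChain N) (hP : C.π 0 ≠ ⊥) (hlt : (peel C).π 0 < C.π 0) :
    unpeel (C.π 0) (peel C) hlt = C := by
  have hL := C.L_pos hP
  cases C with
  | mk L π hs hb =>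
    simp only [unpeel, peel, GChain.mk.injEq]
    constructor
    · simp only at hL ⊢
      omega
    · funext ℓ
      cases ℓ with
      | zero => rfl
      | succ m => rfl

lemma unpeel_peel' (C : GChain N) (hP : C.π 0 ≠ ⊥) (P : Pt N) (hprf : C.π 0 = P)
    (hlt : (peel C).π 0 < P) : unpeel P (peel C) hlt = C := by
  subst hprf
  exact unpeel_peel C hP hlt

lemma branches_eq_union (C : GChain N) (hL : 0 < C.L) :
    C.branches = nsp (C.π 0) ∪ (peel C).branches := by
  ext b
  simp only [mem_branches, Finset.mem_union, mem_nsp, peel]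
  constructor
  · rintro ⟨⟨ℓ, hℓ, hbp⟩, hcard⟩
    cases ℓ with
    | zero => exact Or.inl ⟨hbp, hcard⟩
    | succ m => exact Or.inr ⟨⟨m, by omega, hbp⟩, hcard⟩
  · rintro (⟨hbp, hcard⟩ | ⟨⟨m, hm, hbp⟩, hcard⟩)
    · exact ⟨⟨0, hL, hbp⟩, hcard⟩
    · exact ⟨⟨m + 1, by omega, hbp⟩, hcard⟩

lemma pi_one_lt (C : GChain N) (hP : C.π 0 ≠ ⊥) : C.π 1 < C.π 0 :=
  C.strict 0 (C.L_pos hP)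

lemma L_eq_one_of_pi_one_bot (C : GChain N) (hP : C.π 0 ≠ ⊥) (h1 : C.π 1 = ⊥) :
    C.L = 1 := by
  have hL := C.L_pos hP
  by_contra hne
  have h2 : 2 ≤ C.L := by omega
  have := C.strict 1 (by omega)
  rw [h1] at this
  exact not_lt_bot this

lemma two_le_L (C : GChain N) (hP : C.π 0 ≠ ⊥) (h1 : C.π 1 ≠ ⊥) : 2 ≤ C.L := by
  have hL := C.L_pos hP
  by_contra hne
  have : C.L = 1 := by omega
  exact h1 (C.bot_eq 1 (by omega))

lemma val_peel (q : ℕ) (s : Fin N → Fin N → ℂ) (C : GChain N) (hP : C.π 0 ≠ ⊥) :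
    val q s C = factor q s (C.π 1) * val q s (peel C) := by
  by_cases h1 : C.π 1 = ⊥
  · have hL : C.L = 1 := C.L_eq_one_of_pi_one_bot hP h1
    rw [val, val, factor, if_pos h1]
    have : (peel C).L = 0 := by simp [peel, hL]
    rw [hL, this]
    simp
  · have hL2 : 2 ≤ C.L := C.two_le_L hP h1
    rw [factor, if_neg h1]
    rw [val, Finset.prod_eq_prod_Ico_succ_bot (by omega : 1 < C.L)]
    congr 1
    rw [val]
    have hpeelL : (peel C).L = C.L - 1 := rfl
    rw [hpeelL]
    rw [Finset.prod_Ico_eq_prod_range, Finset.prod_Ico_eq_prod_range]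
    have harith : C.L - 2 = C.L - 1 - 1 := by omega
    rw [← harith]
    apply Finset.prod_congr rfl
    intro k hk
    have : 1 + k + 1 = 2 + k := by omega
    show ((q : ℂ) ^ lvlSum s (C.π (2 + k)) - 1)⁻¹ = ((q : ℂ) ^ lvlSum s ((peel C).π (1 + k)) - 1)⁻¹
    have hpi : (peel C).π (1 + k) = C.π (2 + k) := by
      show C.π (1 + k + 1) = C.π (2 + k)
      rw [this]
    rw [hpi]

lemma branches_peel {F : Finset (Finset (Fin N))} (C : GChain N) (hP : C.π 0 ≠ ⊥)
    (hF : C.branches = F) :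
    (peel C).branches = F \ (nsp (C.π 0) \ nsp (C.π 1)) := by
  have hL := C.L_pos hP
  ext b
  simp only [Finset.mem_sdiff]
  constructor
  · intro hb
    have hbF : b ∈ F := by
      rw [← hF, branches_eq_union C hL]
      exact Finset.mem_union_right _ hb
    refine ⟨hbF, ?_⟩
    rintro ⟨hbP, hbQ⟩
    obtain ⟨⟨m, hm, hbp⟩, hcard⟩ := mem_branches.1 hb
    have hbp1 : b ∈ (C.π 1).parts := by
      have h0 : b ∈ (C.π 0).parts := (mem_nsp.1 hbP).1
      exact chain_interval C.strict C.bot_eq (by omega) (by omega : 1 ≤ m + 1) h0 hbp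
    exact hbQ (mem_nsp.2 ⟨hbp1, hcard⟩)
  · rintro ⟨hbF, hnot⟩
    rw [← hF] at hbF
    obtain ⟨⟨ℓ, hℓ, hbp⟩, hcard⟩ := mem_branches.1 hbF
    cases ℓ with
    | zero =>
      have hbP : b ∈ nsp (C.π 0) := mem_nsp.2 ⟨hbp, hcard⟩
      have hbQ : b ∈ nsp (C.π 1) := by
        by_contra h
        exact hnot ⟨hbP, h⟩
      have h1 : C.π 1 ≠ ⊥ := by
        intro hbot
        rw [hbot] at hbQ
        rw [nsp_bot] at hbQ
        simp at hbQ
      have hL2 : 2 ≤ C.L := C.two_le_L hP h1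
      exact mem_branches.2 ⟨⟨0, by show 0 < C.L - 1; omega, (mem_nsp.1 hbQ).1⟩, hcard⟩
    | succ m =>
      exact mem_branches.2 ⟨⟨m, by show m < C.L - 1; omega, hbp⟩, hcard⟩

lemma branches_unpeel (P : Pt N) (C' : GChain N) (hlt : C'.π 0 < P) :
    (unpeel P C' hlt).branches = nsp P ∪ C'.branches := by
  rw [branches_eq_union (unpeel P C' hlt) (by show 0 < C'.L + 1; omega)]
  rfl

end GChain

open GChain

lemma T_eq_zero_of_not_compat {q : ℕ} {s : Fin N → Fin N → ℂ} {P : Pt N}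
    {F : Finset (Finset (Fin N))} (h : ¬ Compat P F) : T q s P F = 0 := by
  rw [T]
  apply Finset.sum_eq_zero
  rintro ⟨C, hP2, hF2⟩ -
  exfalso
  apply h
  have := compat_of_chain C
  rwa [hP2, hF2] at this

lemma T_bot {q : ℕ} {s : Fin N → Fin N → ℂ} : T q s (⊥ : Pt N) ∅ = 1 := by
  have hall : ∀ C : GChain N, C.π 0 = ⊥ → C.L = 0 := by
    intro C hC
    by_contra h
    have := C.strict 0 (by omega)
    rw [hC] at this
    exact not_lt_bot this
  rw [T]
  have hval : ∀ C : {C : GChain N // C.π 0 = ⊥ ∧ C.branches = ∅}, val q s C.1 = 1 := by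
    rintro ⟨C, hC, -⟩
    rw [val, hall C hC]
    simp
  have hcard : Fintype.card {C : GChain N // C.π 0 = ⊥ ∧ C.branches = ∅} = 1 := by
    rw [Fintype.card_eq_one_iff]
    refine ⟨⟨⟨0, fun _ => ⊥, by omega, fun _ _ => rfl⟩, rfl, by rw [branches]; simp⟩, ?_⟩
    rintro ⟨C, hC, hbr⟩
    apply Subtype.ext
    have hL : C.L = 0 := hall C hC
    cases C with
    | mk L π hs hb =>
      simp only [GChain.mk.injEq]
      simp only at hL
      constructor
      · exact hL
      · funext ℓ
        exact hb ℓ (by omega)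
  rw [Finset.sum_congr rfl (fun C _ => hval C), Finset.sum_const, Finset.card_univ, hcard]
  simp

end SFAux

namespace SFAux

open Finset GChain
open scoped Classical

variable {N : ℕ}

lemma union_sdiff_helper {F D R : Finset (Finset (Fin N))} (hsub : R ⊆ F) :
    R ∪ (F \ (R \ D)) = F := by
  ext x
  simp only [Finset.mem_union, Finset.mem_sdiff]
  constructor
  · rintro (hx | ⟨hx, -⟩)
    · exact hsub hx
    · exact hx
  · intro hx
    by_cases hR : x ∈ R
    · exact Or.inl hR
    · exact Or.inr ⟨hx, fun h => hR h.1⟩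

lemma T_step (q : ℕ) (s : Fin N → Fin N → ℂ) (P : Pt N) (F : Finset (Finset (Fin N)))
    (hP : P ≠ ⊥) (hcompat : Compat P F) :
    T q s P F = ∑ Q ∈ (Finset.univ : Finset (Pt N)).filter (· < P),
      factor q s Q * T q s Q (F \ (nsp P \ nsp Q)) := by
  classical
  rw [T]
  rw [← Finset.sum_fiberwise_of_maps_to (t := (Finset.univ : Finset (Pt N)))
    (g := fun C : {C : GChain N // C.π 0 = P ∧ C.branches = F} => C.1.π 1)
    (fun _ _ => Finset.mem_univ _) (fun C => val q s C.1)]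
  rw [Finset.sum_filter]
  apply Finset.sum_congr rfl
  intro Q _
  by_cases hQP : Q < P
  · rw [if_pos hQP, T, Finset.mul_sum]
    refine Finset.sum_bij'
      (i := fun C hC => ⟨peel C.1, ?_, ?_⟩)
      (j := fun C' _ => ⟨unpeel P C'.1 (by rw [C'.2.1]; exact hQP), rfl, ?_⟩)
      ?_ ?_ ?_ ?_ ?_
    · show (peel C.1).π 0 = Q
      exact (Finset.mem_filter.1 hC).2
    · have hP' : C.1.π 0 ≠ ⊥ := by rw [C.2.1]; exact fun h => hP h
      have h1 := branches_peel C.1 hP' C.2.2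
      rw [h1, C.2.1, (Finset.mem_filter.1 hC).2]
    · -- branches of unpeel
      rename_i C' hC'
      rw [branches_unpeel, C'.2.2]
      exact union_sdiff_helper hcompat.1
    · intro a ha
      exact Finset.mem_univ _
    · intro a ha
      refine Finset.mem_filter.2 ⟨Finset.mem_univ _, ?_⟩
      show a.1.π 0 = Q
      exact a.2.1
    · intro a ha
      apply Subtype.ext
      exact unpeel_peel' a.1 (by rw [a.2.1]; exact fun h => hP h) P a.2.1
        (by have h3 := pi_one_lt a.1 (by rw [a.2.1]; exact fun h => hP h)
            rw [a.2.1] at h3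
            exact h3)
    · intro a ha
      apply Subtype.ext
      rfl
    · intro a ha
      have hP' : a.1.π 0 ≠ ⊥ := by rw [a.2.1]; exact fun h => hP h
      rw [val_peel q s a.1 hP', show factor q s (a.1.π 1) = factor q s Q from by rw [(Finset.mem_filter.1 ha).2]]
  · rw [if_neg hQP]
    apply Finset.sum_eq_zero
    intro C hC
    exfalso
    have hP' : C.1.π 0 ≠ ⊥ := by rw [C.2.1]; exact fun h => hP h
    have hlt := pi_one_lt C.1 hP'
    rw [(Finset.mem_filter.1 hC).2, C.2.1] at hlt
    exact hQP hlt

end SFAux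

namespace SFAux

open Finset GChain
open scoped Classical

variable {N : ℕ}

lemma not_ssubset_parts {P : Pt N} {c d : Finset (Fin N)} (hc : c ∈ P.parts)
    (hd : d ∈ P.parts) : ¬ c ⊂ d :=
  fun h => h.ne (eq_of_subset_parts hc hd h.subset)

variable {F : Finset (Finset (Fin N))}

/-- Partition of a block `d` into maximal `F`-subsets and singletons. -/
noncomputable def splitPart
    (hlam : ∀ b ∈ F, ∀ c ∈ F, b ⊆ c ∨ c ⊆ b ∨ Disjoint b c)
    (hcard : ∀ b ∈ F, 1 < b.card) (d : Finset (Fin N)) (hd : d.Nonempty) :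
    Finpartition d where
  parts := maxSub F d ∪ (d \ (maxSub F d).biUnion id).image (fun x => ({x} : Finset (Fin N)))
  supIndep := by
    rw [Finset.supIndep_iff_pairwiseDisjoint]
    intro u hu v hv huv
    simp only [Finset.coe_union, Set.mem_union, Finset.mem_coe, Finset.mem_image,
      Finset.mem_sdiff] at hu hv
    rcases hu with hu | ⟨x, ⟨hxd, hxU⟩, rfl⟩
    · rcases hv with hv | ⟨y, ⟨hyd, hyU⟩, rfl⟩
      · exact maxSub_disjoint hlam hu hv huv
      · simp only [Function.onFun, id_eq, Finset.disjoint_singleton_right]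
        intro hyu
        exact hyU (Finset.mem_biUnion.2 ⟨u, hu, hyu⟩)
    · rcases hv with hv | ⟨y, ⟨hyd, hyU⟩, rfl⟩
      · simp only [Function.onFun, id_eq, Finset.disjoint_singleton_left]
        intro hxv
        exact hxU (Finset.mem_biUnion.2 ⟨v, hv, hxv⟩)
      · simp only [Function.onFun, id_eq, Finset.disjoint_singleton_left, Finset.mem_singleton]
        intro h
        exact huv (by rw [h])
  sup_parts := by
    rw [Finset.sup_eq_biUnion]
    apply Finset.Subset.antisymm
    · intro x hx
      obtain ⟨t, ht, hxt⟩ := Finset.mem_biUnion.1 hx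
      rcases Finset.mem_union.1 ht with h | h
      · exact (mem_maxSub.1 h).2.1.subset hxt
      · obtain ⟨y, hy, rfl⟩ := Finset.mem_image.1 h
        have : x = y := by simpa using hxt
        exact this ▸ (Finset.mem_sdiff.1 hy).1
    · intro x hx
      by_cases hmem : x ∈ (maxSub F d).biUnion id
      · obtain ⟨c, hc, hxc⟩ := Finset.mem_biUnion.1 hmem
        exact Finset.mem_biUnion.2 ⟨c, Finset.mem_union_left _ hc, hxc⟩
      · refine Finset.mem_biUnion.2 ⟨{x}, ?_, Finset.mem_singleton_self x⟩
        exact Finset.mem_union_right _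
          (Finset.mem_image.2 ⟨x, Finset.mem_sdiff.2 ⟨hx, hmem⟩, rfl⟩)
  bot_notMem := by
    intro h
    rcases Finset.mem_union.1 h with h | h
    · have := hcard _ (mem_maxSub.1 h).1
      simp at this
    · obtain ⟨y, -, hy⟩ := Finset.mem_image.1 h
      have : ({y} : Finset (Fin N)) = (⊥ : Finset (Fin N)) := hy
      simp at this

/-- The unique compatible refinement of `P` whose dying set is `D`. -/
noncomputable def QD (P : Pt N)
    (hlam : ∀ b ∈ F, ∀ c ∈ F, b ⊆ c ∨ c ⊆ b ∨ Disjoint b c)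
    (hcard : ∀ b ∈ F, 1 < b.card) (D : Finset (Finset (Fin N))) : Pt N :=
  P.bind (fun d hd =>
    if d ∈ D then splitPart hlam hcard d (part_nonempty hd)
    else Finpartition.indiscrete (by
      intro h
      exact absurd (h ▸ part_nonempty hd) (by simp)))

variable {hlam : ∀ b ∈ F, ∀ c ∈ F, b ⊆ c ∨ c ⊆ b ∨ Disjoint b c}
variable {hcard : ∀ b ∈ F, 1 < b.card}
variable {P : Pt N} {D : Finset (Finset (Fin N))}

lemma mem_QD {t : Finset (Fin N)} :
    t ∈ (QD P hlam hcard D).parts ↔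
      (t ∈ P.parts ∧ t ∉ D) ∨
      (∃ d ∈ D ∩ P.parts, t ∈ maxSub F d ∨
        (∃ x ∈ d, x ∉ (maxSub F d).biUnion id ∧ t = {x})) := by
  rw [QD, Finpartition.mem_bind]
  constructor
  · rintro ⟨d, hd, ht⟩
    by_cases hdD : d ∈ D
    · rw [if_pos hdD] at ht
      rcases Finset.mem_union.1 ht with h | h
      · exact Or.inr ⟨d, Finset.mem_inter.2 ⟨hdD, hd⟩, Or.inl h⟩
      · obtain ⟨x, hx, rfl⟩ := Finset.mem_image.1 h
        exact Or.inr ⟨d, Finset.mem_inter.2 ⟨hdD, hd⟩,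
          Or.inr ⟨x, (Finset.mem_sdiff.1 hx).1, (Finset.mem_sdiff.1 hx).2, rfl⟩⟩
    · rw [if_neg hdD] at ht
      have : t = d := by simpa [Finpartition.indiscrete] using ht
      subst this
      exact Or.inl ⟨hd, hdD⟩
  · rintro (⟨ht, htD⟩ | ⟨d, hd, h⟩)
    · refine ⟨t, ht, ?_⟩
      rw [if_neg htD]
      simp [Finpartition.indiscrete]
    · obtain ⟨hdD, hdP⟩ := Finset.mem_inter.1 hd
      refine ⟨d, hdP, ?_⟩
      rw [if_pos hdD]
      rcases h with h | ⟨x, hx, hxU, rfl⟩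
      · exact Finset.mem_union_left _ h
      · exact Finset.mem_union_right _
          (Finset.mem_image.2 ⟨x, Finset.mem_sdiff.2 ⟨hx, hxU⟩, rfl⟩)

lemma QD_lt (hD : D ⊆ nsp P) (hne : D.Nonempty) : QD P hlam hcard D < P := by
  have hle : QD P hlam hcard D ≤ P := by
    intro t ht
    rcases mem_QD.1 ht with ⟨h, -⟩ | ⟨d, hd, h⟩
    · exact ⟨t, h, le_rfl⟩
    · obtain ⟨-, hdP⟩ := Finset.mem_inter.1 hd
      rcases h with h | ⟨x, hx, -, rfl⟩
      · exact ⟨d, hdP, (mem_maxSub.1 h).2.1.subset⟩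
      · exact ⟨d, hdP, by simpa using hx⟩
  refine lt_of_le_of_ne hle ?_
  intro heq
  obtain ⟨d₀, hd₀⟩ := hne
  have hd₀P : d₀ ∈ P.parts := (mem_nsp.1 (hD hd₀)).1
  have hd₀card : 1 < d₀.card := (mem_nsp.1 (hD hd₀)).2
  have h2 : d₀ ∈ (QD P hlam hcard D).parts := by rw [heq]; exact hd₀P
  rcases mem_QD.1 h2 with ⟨-, habs⟩ | ⟨d, hd, h⟩
  · exact habs hd₀
  · obtain ⟨-, hdP⟩ := Finset.mem_inter.1 hd
    rcases h with h | ⟨x, -, -, hxeq⟩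
    · exact not_ssubset_parts hd₀P hdP (mem_maxSub.1 h).2.1
    · rw [hxeq] at hd₀card
      simp at hd₀card

lemma nsp_QD (hD : D ⊆ nsp P) :
    nsp (QD P hlam hcard D) = (nsp P \ D) ∪ D.biUnion (maxSub F) := by
  ext b
  simp only [mem_nsp, Finset.mem_union, Finset.mem_sdiff, Finset.mem_biUnion]
  constructor
  · rintro ⟨hb, hbcard⟩
    rcases mem_QD.1 hb with ⟨h, hD'⟩ | ⟨d, hd, h⟩
    · exact Or.inl ⟨⟨h, hbcard⟩, hD'⟩
    · rcases h with h | ⟨x, -, -, rfl⟩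
      · exact Or.inr ⟨d, (Finset.mem_inter.1 hd).1, h⟩
      · simp at hbcard
  · rintro (⟨⟨hbP, hbcard⟩, hbD⟩ | ⟨d, hdD, h⟩)
    · exact ⟨mem_QD.2 (Or.inl ⟨hbP, hbD⟩), hbcard⟩
    · have hdP : d ∈ P.parts := (mem_nsp.1 (hD hdD)).1
      refine ⟨mem_QD.2 (Or.inr ⟨d, Finset.mem_inter.2 ⟨hdD, hdP⟩, Or.inl h⟩), ?_⟩
      exact hcard _ (mem_maxSub.1 h).1

lemma maxSub_not_mem_D (hD : D ⊆ nsp P) {d c : Finset (Fin N)} (hd : d ∈ D)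
    (hc : c ∈ maxSub F d) : c ∉ D := by
  intro hcD
  exact not_ssubset_parts (mem_nsp.1 (hD hcD)).1 (mem_nsp.1 (hD hd)).1 (mem_maxSub.1 hc).2.1

lemma sdiff_nsp_QD (hD : D ⊆ nsp P) :
    nsp P \ nsp (QD P hlam hcard D) = D := by
  rw [nsp_QD hD]
  apply Finset.Subset.antisymm
  · intro b hb
    obtain ⟨h1, h2⟩ := Finset.mem_sdiff.1 hb
    by_contra hbD
    exact h2 (Finset.mem_union_left _ (Finset.mem_sdiff.2 ⟨h1, hbD⟩))
  · intro b hbD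
    refine Finset.mem_sdiff.2 ⟨hD hbD, ?_⟩
    intro hmem
    rcases Finset.mem_union.1 hmem with h | h
    · exact (Finset.mem_sdiff.1 h).2 hbD
    · obtain ⟨d, hdD, hc⟩ := Finset.mem_biUnion.1 h
      exact maxSub_not_mem_D hD hdD hc hbD

lemma QD_compat (hD : D ⊆ nsp P) (hPF : Compat P F) :
    Compat (QD P hlam hcard D) (F \ D) := by
  constructor
  · rw [nsp_QD hD]
    intro b hb
    rcases Finset.mem_union.1 hb with h | h
    · obtain ⟨h1, h2⟩ := Finset.mem_sdiff.1 h
      exact Finset.mem_sdiff.2 ⟨hPF.1 h1, h2⟩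
    · obtain ⟨d, hdD, hc⟩ := Finset.mem_biUnion.1 h
      exact Finset.mem_sdiff.2 ⟨(mem_maxSub.1 hc).1, maxSub_not_mem_D hD hdD hc⟩
  · intro b hb
    obtain ⟨hbF, hbD⟩ := Finset.mem_sdiff.1 hb
    obtain ⟨c, hcP, hbc⟩ := hPF.2 b hbF
    by_cases hcD : c ∈ D
    · have hbc' : b ⊂ c := ssubset_of_subset_of_ne hbc (fun h => hbD (h ▸ hcD))
      obtain ⟨m, hm, hbm⟩ := exists_maxSub hbF hbc'
      exact ⟨m, mem_QD.2 (Or.inr ⟨c, Finset.mem_inter.2 ⟨hcD, hcP⟩, Or.inl hm⟩), hbm⟩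
    · exact ⟨c, mem_QD.2 (Or.inl ⟨hcP, hcD⟩), hbc⟩

/-- Uniqueness: any compatible strict refinement with dying set `D` equals `QD`. -/
lemma QD_unique (hD : D ⊆ nsp P) {Q : Pt N} (hQP : Q < P)
    (hcom : Compat Q (F \ (nsp P \ nsp Q))) (hDQ : nsp P \ nsp Q = D) :
    Q = QD P hlam hcard D := by
  apply eq_of_nsp_eq
  rw [nsp_QD hD]
  rw [hDQ] at hcom
  apply Finset.Subset.antisymm
  · intro b hb
    obtain ⟨hbQ, hbcard⟩ := mem_nsp.1 hb
    obtain ⟨c, hcP, hbc⟩ := hQP.le hbQ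
    simp only [Finset.mem_union, Finset.mem_sdiff, Finset.mem_biUnion]
    by_cases hbceq : b = c
    · subst hbceq
      have hbns : b ∈ nsp P := mem_nsp.2 ⟨hcP, hbcard⟩
      left
      refine ⟨hbns, ?_⟩
      intro hbD
      rw [← hDQ] at hbD
      exact (Finset.mem_sdiff.1 hbD).2 hb
    · have hbc' : b ⊂ c := ssubset_of_subset_of_ne hbc hbceq
      have hccard : 1 < c.card := lt_of_lt_of_le hbcard (Finset.card_le_card hbc)
      have hcns : c ∈ nsp P := mem_nsp.2 ⟨hcP, hccard⟩
      have hcD : c ∈ D := by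
        by_contra hcD
        have hcQ : c ∈ nsp Q := by
          by_contra hcQ
          exact hcD (hDQ ▸ Finset.mem_sdiff.2 ⟨hcns, hcQ⟩)
        exact hbceq (eq_of_subset_parts hbQ (mem_nsp.1 hcQ).1 hbc)
      right
      refine ⟨c, hcD, ?_⟩
      have hbF : b ∈ F := (Finset.mem_sdiff.1 (hcom.1 hb)).1
      refine mem_maxSub.2 ⟨hbF, hbc', ?_⟩
      intro b' hb' hbb' hb'c
      have hb'D : b' ∉ D := by
        intro h
        exact not_ssubset_parts (mem_nsp.1 (hD h)).1 hcP hb'c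
      obtain ⟨e, heQ, hb'e⟩ := hcom.2 b' (Finset.mem_sdiff.2 ⟨hb', hb'D⟩)
      have : b = e := eq_of_subset_parts hbQ heQ (hbb'.subset.trans hb'e)
      exact hbb'.not_subset (this ▸ hb'e)
  · intro b hb
    simp only [Finset.mem_union, Finset.mem_sdiff, Finset.mem_biUnion] at hb
    rcases hb with ⟨hbns, hbD⟩ | ⟨d, hdD, hbmax⟩
    · rw [← hDQ] at hbD
      simp only [Finset.mem_sdiff, not_and, not_not] at hbD
      exact hbD hbns
    · obtain ⟨hbF, hbd, hbmaxi⟩ := mem_maxSub.1 hbmax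
      have hbD : b ∉ D := maxSub_not_mem_D hD hdD hbmax
      obtain ⟨e, heQ, hbe⟩ := hcom.2 b (Finset.mem_sdiff.2 ⟨hbF, hbD⟩)
      obtain ⟨g, hgP, heg⟩ := hQP.le heQ
      have hb1 : 1 < b.card := hcard b hbF
      obtain ⟨x, hxb⟩ := Finset.card_pos.1 (show 0 < b.card by omega)
      have hgd : g = d := P.eq_of_mem_parts hgP (mem_nsp.1 (hD hdD)).1
        (heg (hbe hxb)) (hbd.subset hxb)
      subst hgd
      have hed : e ≠ g := by
        intro h
        subst h
        have : e ∈ nsp Q := mem_nsp.2 ⟨heQ, (mem_nsp.1 (hD hdD)).2⟩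
        have : e ∉ D := by
          rw [← hDQ]
          simp only [Finset.mem_sdiff, not_and, not_not]
          intro
          exact this
        exact this hdD
      have hecard : 1 < e.card := lt_of_lt_of_le (hcard b hbF) (Finset.card_le_card hbe)
      have heF : e ∈ F := (Finset.mem_sdiff.1 (hcom.1 (mem_nsp.2 ⟨heQ, hecard⟩))).1
      have hbeq : b = e := by
        by_contra hne
        exact hbmaxi e heF (ssubset_of_subset_of_ne hbe hne)
          (ssubset_of_subset_of_ne heg hed)
      rw [hbeq]
      exact mem_nsp.2 ⟨heQ, hecard⟩

end SFAux

namespace SFAux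

open Finset GChain
open scoped Classical

variable {N : ℕ}

lemma alg_helper (A B C : ℂ) (hA : A ≠ 0) : A⁻¹ * ((A * B) * C) = C * B := by
  field_simp

lemma nsp_sdiff_nonempty {P Q : Pt N} (h : Q < P) : (nsp P \ nsp Q).Nonempty := by
  rw [Finset.nonempty_iff_ne_empty]
  intro hempty
  have hsub : nsp P ⊆ nsp Q := Finset.sdiff_eq_empty_iff_subset.1 hempty
  have hnsp : nsp Q = nsp P := by
    apply Finset.Subset.antisymm ?_ hsub
    intro b hb
    obtain ⟨hbQ, hbcard⟩ := mem_nsp.1 hb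
    obtain ⟨c, hcP, hbc⟩ := h.le hbQ
    have hccard : 1 < c.card := lt_of_lt_of_le hbcard (Finset.card_le_card hbc)
    have hcns : c ∈ nsp P := mem_nsp.2 ⟨hcP, hccard⟩
    have hcQ : c ∈ nsp Q := hsub hcns
    have : b = c := eq_of_subset_parts hbQ (mem_nsp.1 hcQ).1 hbc
    exact this ▸ hcns
  exact h.ne (eq_of_nsp_eq hnsp)

lemma sdiff_sdiff_helper {F R D : Finset (Finset (Fin N))} (hRF : R ⊆ F) (hDR : D ⊆ R) :
    (F \ D) \ (F \ R) = R \ D := by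
  ext x
  simp only [Finset.mem_sdiff, not_and, not_not]
  constructor
  · rintro ⟨⟨hxF, hxD⟩, h⟩
    exact ⟨h hxF, hxD⟩
  · rintro ⟨hxR, hxD⟩
    exact ⟨⟨hRF hxR, hxD⟩, fun _ => hxR⟩

theorem main_claim (q : ℕ) (hq : 1 < q) (s : Fin N → Fin N → ℂ) (P : Pt N) :
    ∀ F : Finset (Finset (Fin N)),
    P ≠ ⊥ →
    Compat P F →
    (∀ b ∈ F, ∀ c ∈ F, b ⊆ c ∨ c ⊆ b ∨ Disjoint b c) →
    (∀ b ∈ F, 1 < b.card) →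
    (∀ b ∈ F, b ≠ Finset.univ → 0 < (branchExp s b).re) →
    T q s P F =
      (∑ C ∈ (nsp P).powerset.erase (nsp P), ∏ b ∈ C, ((q : ℂ) ^ branchExp s b - 1)⁻¹) *
        ∏ b ∈ F \ nsp P, ((q : ℂ) ^ branchExp s b - 1)⁻¹ := by
  induction P using WellFoundedLT.induction with
  | ind P IH =>
  intro F hP hcompat hlam hcard hre
  rw [T_step q s P F hP hcompat]
  have hstep2 : ∑ Q ∈ (Finset.univ : Finset (Pt N)).filter (· < P),
      factor q s Q * T q s Q (F \ (nsp P \ nsp Q)) =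
      ∑ Q ∈ (Finset.univ : Finset (Pt N)).filter
          (fun Q => Q < P ∧ Compat Q (F \ (nsp P \ nsp Q))),
        ∏ b ∈ F \ (nsp P \ nsp Q), ((q : ℂ) ^ branchExp s b - 1)⁻¹ := by
    rw [← Finset.filter_filter (· < P) (fun Q => Compat Q (F \ (nsp P \ nsp Q)))]
    rw [Finset.sum_filter (fun Q => Compat Q (F \ (nsp P \ nsp Q)))]
    apply Finset.sum_congr rfl
    intro Q hQ
    have hQP : Q < P := (Finset.mem_filter.1 hQ).2
    by_cases hcom : Compat Q (F \ (nsp P \ nsp Q))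
    · rw [if_pos hcom]
      by_cases hQbot : Q = ⊥
      · subst hQbot
        have hns : nsp (⊥ : Pt N) = ∅ := nsp_bot
        have hFQ : F \ (nsp P \ nsp (⊥ : Pt N)) = ∅ := by
          by_contra hne
          obtain ⟨b, hb⟩ := Finset.nonempty_iff_ne_empty.2 hne
          obtain ⟨c, hc, hbc⟩ := hcom.2 b hb
          obtain ⟨a, -, ha⟩ := Finpartition.mem_bot_iff.1 hc
          have h1 : 1 < b.card := hcard b (Finset.mem_sdiff.1 hb).1
          have h2 : b.card ≤ 1 := by
            have := Finset.card_le_card hbc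
            rw [← ha] at this
            simpa using this
          omega
        rw [hFQ, T_bot, factor, if_pos rfl]
        simp
      · -- main case : use IH
        have hF'F : F \ (nsp P \ nsp Q) ⊆ F := Finset.sdiff_subset
        have hIH := IH Q hQP (F \ (nsp P \ nsp Q)) hQbot hcom
          (fun b hb c hc => hlam b (hF'F hb) c (hF'F hc))
          (fun b hb => hcard b (hF'F hb))
          (fun b hb hbne => hre b (hF'F hb) hbne)
        have hxne : ∀ b ∈ nsp Q, (q : ℂ) ^ branchExp s b ≠ 1 := by
          intro b hb
          have hbF' : b ∈ F \ (nsp P \ nsp Q) := hcom.1 hb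
          have hbuniv : b ≠ Finset.univ := by
            intro h
            exact univ_not_mem_of_lt hQP (h ▸ (mem_nsp.1 hb).1)
          exact cpow_ne_one hq (hre b (hF'F hbF') hbuniv)
        have hkey := key_identity (nsp Q) (fun b => (q : ℂ) ^ branchExp s b) hxne
        have hfac : factor q s Q = (∏ b ∈ nsp Q, (q : ℂ) ^ branchExp s b - 1)⁻¹ := by
          rw [factor, if_neg hQbot, lvlSum, cpow_sum hq]
        have hprodne : (∏ b ∈ nsp Q, (q : ℂ) ^ branchExp s b - 1) ≠ 0 := by
          rw [← cpow_sum hq]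
          apply sub_ne_zero.2
          apply cpow_ne_one hq
          rw [Complex.re_sum]
          apply Finset.sum_pos
          · intro b hb
            have hbF' : b ∈ F \ (nsp P \ nsp Q) := hcom.1 hb
            have hbuniv : b ≠ Finset.univ := by
              intro h
              exact univ_not_mem_of_lt hQP (h ▸ (mem_nsp.1 hb).1)
            exact hre b (hF'F hbF') hbuniv
          · exact Finset.nonempty_iff_ne_empty.2 (fun h => hQbot (nsp_eq_empty_iff.1 h))
        rw [hIH, hfac, hkey, ← Finset.prod_sdiff (hcom.1 : nsp Q ⊆ F \ (nsp P \ nsp Q))]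
        exact alg_helper _ _ _ hprodne
    · rw [if_neg hcom, T_eq_zero_of_not_compat hcom, mul_zero]
  rw [hstep2]
  have hstep3 : ∑ Q ∈ (Finset.univ : Finset (Pt N)).filter
        (fun Q => Q < P ∧ Compat Q (F \ (nsp P \ nsp Q))),
      ∏ b ∈ F \ (nsp P \ nsp Q), ((q : ℂ) ^ branchExp s b - 1)⁻¹ =
      ∑ D ∈ (nsp P).powerset.filter (·.Nonempty),
        ∏ b ∈ F \ D, ((q : ℂ) ^ branchExp s b - 1)⁻¹ := by
    refine Finset.sum_bij' (i := fun Q _ => nsp P \ nsp Q)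
      (j := fun D _ => QD P hlam hcard D) ?_ ?_ ?_ ?_ ?_
    · intro Q hQ
      have hQP : Q < P := (Finset.mem_filter.1 hQ).2.1
      exact Finset.mem_filter.2
        ⟨Finset.mem_powerset.2 Finset.sdiff_subset, nsp_sdiff_nonempty hQP⟩
    · intro D hD
      have hDsub : D ⊆ nsp P := Finset.mem_powerset.1 (Finset.mem_filter.1 hD).1
      have hDne : D.Nonempty := (Finset.mem_filter.1 hD).2
      refine Finset.mem_filter.2 ⟨Finset.mem_univ _, QD_lt hDsub hDne, ?_⟩
      rw [sdiff_nsp_QD hDsub]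
      exact QD_compat hDsub hcompat
    · intro Q hQ
      have hQP : Q < P := (Finset.mem_filter.1 hQ).2.1
      have hcom : Compat Q (F \ (nsp P \ nsp Q)) := (Finset.mem_filter.1 hQ).2.2
      exact (QD_unique Finset.sdiff_subset hQP hcom rfl).symm
    · intro D hD
      have hDsub : D ⊆ nsp P := Finset.mem_powerset.1 (Finset.mem_filter.1 hD).1
      exact sdiff_nsp_QD hDsub
    · intro Q hQ
      rfl
  rw [hstep3]
  have hstep4 : ∀ D ∈ (nsp P).powerset.filter (·.Nonempty),
      ∏ b ∈ F \ D, ((q : ℂ) ^ branchExp s b - 1)⁻¹ =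
      (∏ b ∈ nsp P \ D, ((q : ℂ) ^ branchExp s b - 1)⁻¹) *
        ∏ b ∈ F \ nsp P, ((q : ℂ) ^ branchExp s b - 1)⁻¹ := by
    intro D hD
    have hDsub : D ⊆ nsp P := Finset.mem_powerset.1 (Finset.mem_filter.1 hD).1
    have hsub2 : F \ nsp P ⊆ F \ D := by
      intro x hx
      obtain ⟨h1, h2⟩ := Finset.mem_sdiff.1 hx
      exact Finset.mem_sdiff.2 ⟨h1, fun h => h2 (hDsub h)⟩
    rw [← Finset.prod_sdiff hsub2, sdiff_sdiff_helper hcompat.1 hDsub]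
  rw [Finset.sum_congr rfl hstep4, ← Finset.sum_mul]
  congr 1
  refine Finset.sum_bij' (i := fun D _ => nsp P \ D) (j := fun C _ => nsp P \ C)
    ?_ ?_ ?_ ?_ ?_
  · intro D hD
    have hDsub : D ⊆ nsp P := Finset.mem_powerset.1 (Finset.mem_filter.1 hD).1
    obtain ⟨d, hd⟩ := (Finset.mem_filter.1 hD).2
    refine Finset.mem_erase.2 ⟨?_, Finset.mem_powerset.2 Finset.sdiff_subset⟩
    intro h
    have h' : nsp P \ D = nsp P := h
    have : d ∈ nsp P \ D := by rw [h']; exact hDsub hd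
    exact (Finset.mem_sdiff.1 this).2 hd
  · intro C hC
    have hCne : C ≠ nsp P := (Finset.mem_erase.1 hC).1
    have hCsub : C ⊆ nsp P := Finset.mem_powerset.1 (Finset.mem_erase.1 hC).2
    refine Finset.mem_filter.2 ⟨Finset.mem_powerset.2 Finset.sdiff_subset, ?_⟩
    exact Finset.sdiff_nonempty.2 (fun h => hCne (Finset.Subset.antisymm hCsub h))
  · intro D hD
    exact Finset.sdiff_sdiff_eq_self (Finset.mem_powerset.1 (Finset.mem_filter.1 hD).1)
  · intro C hC
    exact Finset.sdiff_sdiff_eq_self (Finset.mem_powerset.1 (Finset.mem_erase.1 hC).2)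
  · intro D hD
    rfl

end SFAux

namespace SFAux

open Finset GChain SplittingFiltrationAux
open scoped Classical

variable {N : ℕ}

/-- Forget the top condition. -/
def toChain (S : SplittingFiltration N) : GChain N :=
  ⟨S.L, S.π, S.strict, S.bot_eq⟩

lemma toChain_branches (S : SplittingFiltration N) : (toChain S).branches = S.branches := rfl

noncomputable def sfEquiv (Sstar : SplittingFiltration N) :
    {S : SplittingFiltration N // S.branches = Sstar.branches} ≃
      {C : GChain N // C.π 0 = Sstar.π 0 ∧ C.branches = Sstar.branches} where
  toFun S := ⟨toChain S.1, by
    constructor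
    · apply Finpartition.ext
      rw [show (toChain S.1).π 0 = S.1.π 0 from rfl, S.1.top_eq, Sstar.top_eq]
    · rw [toChain_branches]
      exact S.2⟩
  invFun C := ⟨⟨C.1.L, C.1.π, by rw [C.2.1]; exact Sstar.top_eq, C.1.strict, C.1.bot_eq⟩, by
    have := C.2.2
    exact this⟩
  left_inv S := rfl
  right_inv C := rfl

end SFAux

open SFAux SFAux.GChain SFAux.SplittingFiltrationAux in
theorem sum_level_eq_branch' (N : ℕ) (hN : 2 ≤ N) (q : ℕ) (hq : 1 < q)
    (Sstar : SplittingFiltration N) (hred : Sstar.Reduced) (hM : 0 < Sstar.mult q)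
    (s : Fin N → Fin N → ℂ)
    (hs : ∀ b ∈ Sstar.branches, b ≠ Finset.univ → 0 < (branchExp s b).re) :
    ∑' S : {S : SplittingFiltration N // S.branches = Sstar.branches},
        (S.1.mult q : ℂ) / (q : ℂ) ^ (N - 1) *
          ∏ ℓ ∈ Finset.Ico 1 S.1.L, ((q : ℂ) ^ levelExp S.1 s ℓ - 1)⁻¹ =
      (Sstar.mult q : ℂ) / (q : ℂ) ^ (N - 1) *
        ∏ b ∈ Sstar.branches.filter (fun b => b ≠ Finset.univ),
          ((q : ℂ) ^ branchExp s b - 1)⁻¹ := by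
  classical
  have hparts : (Sstar.π 0).parts = {Finset.univ} := Sstar.top_eq
  have hNcard : (Finset.univ : Finset (Fin N)).card = N := by simp
  have hP0bot : Sstar.π 0 ≠ ⊥ := by
    intro h
    have hu : Finset.univ ∈ (Sstar.π 0).parts := by
      rw [hparts]; exact Finset.mem_singleton_self _
    rw [h] at hu
    obtain ⟨a, -, ha⟩ := Finpartition.mem_bot_iff.1 hu
    have := congrArg Finset.card ha
    simp only [Finset.card_singleton] at this
    omega
  have hL1 : 0 < Sstar.L := (toChain Sstar).L_pos hP0bot
  have hunivB : Finset.univ ∈ Sstar.branches := by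
    apply (mem_branchesS Sstar).2
    refine ⟨⟨0, hL1, by rw [hparts]; exact Finset.mem_singleton_self _⟩, by omega⟩
  have hnsp : nsp (Sstar.π 0) = {Finset.univ} := by
    rw [nsp, hparts]
    rw [Finset.filter_singleton, if_pos (by omega)]
  have hcompat : Compat (Sstar.π 0) Sstar.branches := by
    constructor
    · rw [hnsp]
      intro b hb
      rw [Finset.mem_singleton.1 hb]
      exact hunivB
    · intro b hb
      exact ⟨Finset.univ, by rw [hparts]; exact Finset.mem_singleton_self _,
        Finset.subset_univ b⟩
  have hlam : ∀ b ∈ Sstar.branches, ∀ c ∈ Sstar.branches,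
      b ⊆ c ∨ c ⊆ b ∨ Disjoint b c := by
    intro b hb c hc
    exact branches_laminar (toChain Sstar) hb hc
  have hcard : ∀ b ∈ Sstar.branches, 1 < b.card :=
    fun b hb => ((mem_branchesS Sstar).1 hb).2
  have hmain := main_claim q hq s (Sstar.π 0) Sstar.branches hP0bot hcompat hlam hcard hs
  have hone : (∑ C ∈ (nsp (Sstar.π 0)).powerset.erase (nsp (Sstar.π 0)),
      ∏ b ∈ C, ((q : ℂ) ^ branchExp s b - 1)⁻¹) = 1 := by
    rw [hnsp]
    have hset : ({Finset.univ} : Finset (Finset (Fin N))).powerset.erase {Finset.univ} =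
        {∅} := by
      ext C
      simp only [Finset.mem_erase, Finset.mem_powerset, Finset.subset_singleton_iff,
        Finset.mem_singleton]
      constructor
      · rintro ⟨hne, h | h⟩
        · exact h
        · exact absurd h hne
      · rintro rfl
        refine ⟨?_, Or.inl rfl⟩
        intro h
        have := congrArg Finset.card h
        simp at this
    rw [hset]
    simp
  rw [hone, one_mul] at hmain
  have hfilter : Sstar.branches.filter (fun b => b ≠ Finset.univ) =
      Sstar.branches \ nsp (Sstar.π 0) := by
    rw [hnsp]
    ext b
    simp [Finset.mem_sdiff, Finset.mem_filter]
  -- now convert the tsum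
  haveI : Fintype {S : SplittingFiltration N // S.branches = Sstar.branches} :=
    Fintype.ofEquiv _ (sfEquiv Sstar).symm
  rw [tsum_fintype]
  have hsummand : ∀ S : {S : SplittingFiltration N // S.branches = Sstar.branches},
      (S.1.mult q : ℂ) / (q : ℂ) ^ (N - 1) *
          ∏ ℓ ∈ Finset.Ico 1 S.1.L, ((q : ℂ) ^ levelExp S.1 s ℓ - 1)⁻¹ =
      (Sstar.mult q : ℂ) / (q : ℂ) ^ (N - 1) * val q s (toChain S.1) := by
    intro S
    rw [mult_eq_of_branches_eq q S.2]
    rfl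
  rw [Finset.sum_congr rfl (fun S _ => hsummand S), ← Finset.mul_sum]
  rw [hfilter, ← hmain, T]
  congr 1
  exact Fintype.sum_equiv (sfEquiv Sstar) _ _ (fun S => rfl)

/-- for reduced `𝔖*` with `M_{𝔖*,q} > 0` and `s ∈ BP_{𝔖*}`, the sum of
the level functions `J_{𝔖,q}(0,s)` over all `𝔖` with `B(𝔖) = B(𝔖*)` equals the branch
function `I_{𝔖*,q}(s)`. -/
theorem sum_level_eq_branch (N : ℕ) (hN : 2 ≤ N) (q : ℕ) (hq : 1 < q)
    (Sstar : SplittingFiltration N) (hred : Sstar.Reduced) (hM : 0 < Sstar.mult q)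
    (s : Fin N → Fin N → ℂ)
    (hs : ∀ b ∈ Sstar.branches, b ≠ Finset.univ → 0 < (branchExp s b).re) :
    ∑' S : {S : SplittingFiltration N // S.branches = Sstar.branches},
        (S.1.mult q : ℂ) / (q : ℂ) ^ (N - 1) *
          ∏ ℓ ∈ Finset.Ico 1 S.1.L, ((q : ℂ) ^ levelExp S.1 s ℓ - 1)⁻¹ =
      (Sstar.mult q : ℂ) / (q : ℂ) ^ (N - 1) *
        ∏ b ∈ Sstar.branches.filter (fun b => b ≠ Finset.univ),
          ((q : ℂ) ^ branchExp s b - 1)⁻¹ := by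
  exact sum_level_eq_branch' N hN q hq Sstar hred hM s hs
end
end
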